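/- arXiv:2203.02577 — 3 statements merged into one kernel-verified Lean document; each statement's English description precedes it below -/
import Mathlib

section
/- Let g : ℍ → ℂ be an injective holomorphic map on the upper half-plane satisfying g(z+1) = g(z) + 1 for all z ∈ ℍ. Then the function h on the punctured unit disk defined by h(exp(2πi z)) = exp(2πi g(z)) is well-defined, holomorphic, injective, and extends holomorphically to 0 with h(0) = 0. -/
open Complex Metric Set Filter Topology

namespace Stmt2Aux

noncomputable def cc : ℂ := 2 * Real.pi * Complex.I

noncomputable def ee (z : ℂ) : ℂ := Complex.exp (cc * z)

lemma cc_ne : cc ≠ 0 := by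
  unfold cc
  exact mul_ne_zero (mul_ne_zero two_ne_zero (by exact_mod_cast Real.pi_ne_zero)) I_ne_zero

lemma ee_ne (z : ℂ) : ee z ≠ 0 := Complex.exp_ne_zero _

lemma ee_add_int (z : ℂ) (n : ℤ) : ee (z + n) = ee z := by
  unfold ee
  rw [mul_add, Complex.exp_add]
  have h : cc * n = n * (2 * Real.pi * I) := by unfold cc; ring
  rw [h, Complex.exp_int_mul_two_pi_mul_I, mul_one]

lemma ee_eq_iff {z w : ℂ} : ee z = ee w ↔ ∃ n : ℤ, z = w + n := by
  unfold ee
  rw [Complex.exp_eq_exp_iff_exists_int]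
  constructor
  · rintro ⟨n, h⟩
    refine ⟨n, mul_left_cancel₀ cc_ne ?_⟩
    rw [h]; unfold cc; ring
  · rintro ⟨n, rfl⟩
    exact ⟨n, by unfold cc; ring⟩

lemma re_cc_mul (z : ℂ) : (cc * z).re = -(2 * Real.pi * z.im) := by
  unfold cc
  simp [Complex.mul_re, Complex.mul_im]

lemma abs_ee (z : ℂ) : ‖ee z‖ = Real.exp (-(2 * Real.pi * z.im)) := by
  rw [ee, Complex.norm_exp, re_cc_mul]

lemma ee_lt_one {z : ℂ} (hz : 0 < z.im) : ‖ee z‖ < 1 := by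
  rw [abs_ee]
  rw [Real.exp_lt_one_iff]
  nlinarith [Real.pi_pos]

lemma im_div_cc (x : ℂ) : (x / cc).im = -x.re / (2 * Real.pi) := by
  have hπ := Real.pi_ne_zero
  rw [Complex.div_im]
  unfold cc
  simp [Complex.mul_re, Complex.mul_im, Complex.normSq_apply]
  field_simp

lemma ee_log {q : ℂ} (hq : q ≠ 0) : ee (Complex.log q / cc) = q := by
  unfold ee
  rw [mul_comm, div_mul_cancel₀ _ cc_ne, Complex.exp_log hq]

lemma im_log_div {q : ℂ} (hq : q ≠ 0) (h1 : ‖q‖ < 1) :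
    0 < (Complex.log q / cc).im := by
  rw [im_div_cc, Complex.log_re]
  have h0 : 0 < ‖q‖ := norm_pos_iff.mpr hq
  have h3 := Real.log_neg h0 h1
  have h2 : (0:ℝ) < 2 * Real.pi := by positivity
  exact div_pos (by linarith) h2


section G

variable (g : ℂ → ℂ)

lemma gper (hper : ∀ z : ℂ, 0 < z.im → g (z + 1) = g z + 1) (n : ℤ) :
    ∀ z : ℂ, 0 < z.im → g (z + n) = g z + n := by
  induction n using Int.induction_on with
  | zero => simp
  | succ n ih =>
    intro z hz
    have ihz := ih z hz
    push_cast at ihz ⊢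
    have him : 0 < (z + (n:ℂ)).im := by simpa using hz
    have h1 : z + ((n:ℂ) + 1) = (z + (n:ℂ)) + 1 := by ring
    rw [h1, hper _ him, ihz]
    ring
  | pred n ih =>
    intro z hz
    have ihz := ih z hz
    push_cast at ihz ⊢
    have him : 0 < (z + (-(n:ℂ) - 1)).im := by simpa using hz
    have h1 := hper _ him
    have h2 : z + (-(n:ℂ) - 1) + 1 = z + -(n:ℂ) := by ring
    rw [h2] at h1
    linear_combination ihz - h1

lemma welldef (hper : ∀ z : ℂ, 0 < z.im → g (z + 1) = g z + 1) {z1 z2 : ℂ}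
    (h2 : 0 < z2.im) (he : ee z1 = ee z2) : ee (g z1) = ee (g z2) := by
  obtain ⟨n, rfl⟩ := ee_eq_iff.mp he
  rw [gper g hper n z2 h2, ee_add_int]

noncomputable def hraw : ℂ → ℂ := fun q => Complex.exp (cc * g (Complex.log q / cc))

lemma hraw_eq (hper : ∀ z : ℂ, 0 < z.im → g (z + 1) = g z + 1) {q z : ℂ}
    (hz : 0 < z.im) (hzq : ee z = q) : hraw g q = ee (g z) := by
  have hq : q ≠ 0 := hzq ▸ ee_ne z
  have : hraw g q = ee (g (Complex.log q / cc)) := rfl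
  rw [this]
  exact welldef g hper hz (by rw [ee_log hq, ← hzq])

lemma hraw_spec (hper : ∀ z : ℂ, 0 < z.im → g (z + 1) = g z + 1) {z : ℂ}
    (hz : 0 < z.im) : hraw g (ee z) = ee (g z) :=
  hraw_eq g hper hz rfl

lemma hraw_ne (q : ℂ) : hraw g q ≠ 0 := Complex.exp_ne_zero _

lemma hraw_inj (hinj : Set.InjOn g {z : ℂ | 0 < z.im})
    (hper : ∀ z : ℂ, 0 < z.im → g (z + 1) = g z + 1) :
    Set.InjOn (hraw g) (ball (0:ℂ) 1 \ {0}) := by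
  rintro q1 ⟨hq1b, hq1⟩ q2 ⟨hq2b, hq2⟩ he
  rw [mem_ball_zero_iff] at hq1b hq2b
  rw [mem_singleton_iff] at hq1 hq2
  set z1 := Complex.log q1 / cc with hz1
  set z2 := Complex.log q2 / cc with hz2
  have h1 : 0 < z1.im := im_log_div hq1 hq1b
  have h2 : 0 < z2.im := im_log_div hq2 hq2b
  have he1 : ee z1 = q1 := ee_log hq1
  have he2 : ee z2 = q2 := ee_log hq2
  have he' : ee (g z1) = ee (g z2) := he
  obtain ⟨n, hn⟩ := ee_eq_iff.mp he'
  have h2n : 0 < (z2 + (n:ℂ)).im := by simpa using h2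
  have : g z1 = g (z2 + n) := by rw [gper g hper n z2 h2, hn]
  have hz12 : z1 = z2 + n := hinj h1 h2n this
  rw [← he1, ← he2, hz12, ee_add_int]

noncomputable def halt : ℂ → ℂ := fun q => Complex.exp (cc * g (Complex.log (-q) / cc + 2⁻¹))

lemma ee_alt {q : ℂ} (hq : q ≠ 0) : ee (Complex.log (-q) / cc + 2⁻¹) = q := by
  unfold ee
  have h2 : cc * 2⁻¹ = Real.pi * I := by unfold cc; ring
  rw [mul_add, Complex.exp_add, mul_comm cc, div_mul_cancel₀ _ cc_ne,
    Complex.exp_log (neg_ne_zero.2 hq), h2, Complex.exp_pi_mul_I]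
  ring

lemma im_alt {q : ℂ} (hq : q ≠ 0) (h1 : ‖q‖ < 1) :
    0 < (Complex.log (-q) / cc + 2⁻¹).im := by
  have h : ((2:ℂ)⁻¹).im = 0 := by simp
  rw [Complex.add_im, h, add_zero]
  exact im_log_div (neg_ne_zero.2 hq) (by rwa [norm_neg])

lemma hraw_eq_halt (hper : ∀ z : ℂ, 0 < z.im → g (z + 1) = g z + 1) {q : ℂ}
    (hq : q ≠ 0) (h1 : ‖q‖ < 1) : hraw g q = halt g q := by
  have h : halt g q = ee (g (Complex.log (-q) / cc + 2⁻¹)) := rfl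
  rw [h]
  exact hraw_eq g hper (im_alt hq h1) (ee_alt hq)

lemma isOpen_halfplane : IsOpen {z : ℂ | 0 < z.im} :=
  isOpen_lt continuous_const Complex.continuous_im

lemma isOpen_punctball : IsOpen (ball (0:ℂ) 1 \ {0}) :=
  isOpen_ball.sdiff isClosed_singleton

lemma mem_punctball {q : ℂ} (h : q ∈ ball (0:ℂ) 1 \ {0}) :
    ‖q‖ < 1 ∧ q ≠ 0 := by
  obtain ⟨h1, h2⟩ := h
  rw [mem_ball_zero_iff] at h1
  exact ⟨h1, h2⟩

lemma hraw_diffOn (hdiff : DifferentiableOn ℂ g {z : ℂ | 0 < z.im})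
    (hper : ∀ z : ℂ, 0 < z.im → g (z + 1) = g z + 1) :
    DifferentiableOn ℂ (hraw g) (ball (0:ℂ) 1 \ {0}) := by
  intro q hqV
  obtain ⟨hqb, hq0⟩ := mem_punctball hqV
  have hcase : q ∈ Complex.slitPlane ∨ -q ∈ Complex.slitPlane := by
    rw [Complex.mem_slitPlane_iff, Complex.mem_slitPlane_iff]
    by_contra hc
    push_neg at hc
    obtain ⟨⟨ha1, ha2⟩, hb1, hb2⟩ := hc
    apply hq0
    rw [Complex.ext_iff]
    simp only [Complex.neg_re, Complex.neg_im, neg_nonpos] at *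
    exact ⟨by simpa using le_antisymm ha1 hb1, by simpa using ha2⟩
  rcases hcase with hsl | hsl
  · have hz := im_log_div hq0 hqb
    have dg : DifferentiableAt ℂ g (Complex.log q / cc) :=
      hdiff.differentiableAt (isOpen_halfplane.mem_nhds hz)
    have dlog : DifferentiableAt ℂ Complex.log q := Complex.differentiableAt_log hsl
    have d2 : DifferentiableAt ℂ (fun q => g (Complex.log q / cc)) q :=
      dg.comp q (dlog.div_const cc)
    exact ((d2.const_mul cc).cexp).differentiableWithinAt
  · have hz := im_alt hq0 hqb
    have dg : DifferentiableAt ℂ g (Complex.log (-q) / cc + 2⁻¹) :=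
      hdiff.differentiableAt (isOpen_halfplane.mem_nhds hz)
    have dlog : DifferentiableAt ℂ (fun q : ℂ => Complex.log (-q)) q :=
      (Complex.differentiableAt_log hsl).comp q (differentiable_id.neg).differentiableAt
    have d2 : DifferentiableAt ℂ (fun q => g (Complex.log (-q) / cc + 2⁻¹)) q :=
      dg.comp q ((dlog.div_const cc).add_const 2⁻¹)
    have dhalt : DifferentiableAt ℂ (halt g) q := ((d2.const_mul cc).cexp)
    have hev : hraw g =ᶠ[𝓝 q] halt g := by
      filter_upwards [isOpen_punctball.mem_nhds hqV] with x hx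
      obtain ⟨hxb, hx0⟩ := mem_punctball hx
      exact hraw_eq_halt g hper hx0 hxb
    exact (hev.differentiableAt_iff.mpr dhalt).differentiableWithinAt

lemma hraw_factor_zpow (hdiff : DifferentiableOn ℂ g {z : ℂ | 0 < z.im})
    (hinj : Set.InjOn g {z : ℂ | 0 < z.im})
    (hper : ∀ z : ℂ, 0 < z.im → g (z + 1) = g z + 1) :
    ∃ (k : ℤ) (w : ℂ → ℂ), AnalyticAt ℂ w 0 ∧ w 0 ≠ 0 ∧
      ∀ᶠ q in 𝓝[≠] (0:ℂ), hraw g q = q ^ k * w q := by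
  set q0 : ℂ := 2⁻¹ with hq0def
  have hq0n : ‖q0‖ = 2⁻¹ := by
    rw [hq0def, norm_inv]
    simp
  have hq0V : q0 ∈ ball (0:ℂ) 1 \ {0} := by
    constructor
    · rw [mem_ball_zero_iff, hq0n]; norm_num
    · simp [hq0def]
  have hdV := hraw_diffOn g hdiff hper
  have han : AnalyticAt ℂ (hraw g) q0 :=
    hdV.analyticAt (isOpen_punctball.mem_nhds hq0V)
  -- not locally constant
  have hnc : ¬ (∀ᶠ z in 𝓝 q0, hraw g z = hraw g q0) := by
    intro h
    have h2 : {z | hraw g z = hraw g q0} ∩ (ball (0:ℂ) 1 \ {0}) ∈ 𝓝 q0 :=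
      Filter.inter_mem h (isOpen_punctball.mem_nhds hq0V)
    obtain ⟨r, hr, hsub⟩ := Metric.mem_nhds_iff.mp h2
    set ε := min r 4⁻¹ / 2 with hεdef
    have hε : 0 < ε := by positivity
    have hεr : ε < r := by
      have : ε ≤ r / 2 := by
        rw [hεdef]
        gcongr
        exact min_le_left _ _
      linarith
    set x : ℂ := q0 + ε with hxdef
    have hx : x ∈ ball q0 r := by
      rw [mem_ball, hxdef, dist_eq_norm]
      simpa [Complex.norm_real, abs_of_pos hε] using hεr
    obtain ⟨hx1, hx2⟩ := hsub hx
    have : x = q0 := hraw_inj g hinj hper hx2 hq0V hx1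
    rw [hxdef] at this
    have : (ε : ℂ) = 0 := by linear_combination this
    rw [Complex.ofReal_eq_zero] at this
    exact hε.ne' this
  have hopen := han.eventually_constant_or_nhds_le_map_nhds.resolve_left hnc
  have himg : hraw g '' ball q0 8⁻¹ ∈ 𝓝 (hraw g q0) :=
    hopen (Filter.image_mem_map (ball_mem_nhds q0 (by norm_num)))
  obtain ⟨ε, hε, hball⟩ := Metric.mem_nhds_iff.mp himg
  have hBV : ∀ x ∈ ball q0 8⁻¹, x ∈ (ball (0:ℂ) 1 \ {0}) ∧ 4⁻¹ < ‖x‖ := by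
    intro x hx
    rw [mem_ball, dist_eq_norm] at hx
    have h1 : ‖x‖ < 1 := by
      have := norm_sub_norm_le x q0
      have := norm_add_le (x - q0) q0
      have : ‖x‖ ≤ ‖x - q0‖ + ‖q0‖ := by
        simpa using norm_add_le (x - q0) q0
      rw [hq0n] at this
      linarith
    have h2 : 4⁻¹ < ‖x‖ := by
      have : ‖q0‖ - ‖x‖ ≤ ‖x - q0‖ := by
        simpa [norm_sub_rev] using norm_sub_norm_le q0 x
      rw [hq0n] at this
      linarith
    refine ⟨⟨mem_ball_zero_iff.mpr h1, ?_⟩, h2⟩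
    intro h0
    rw [mem_singleton_iff] at h0
    rw [h0] at h2
    simp at h2
    linarith
  set c0 := hraw g q0 with hc0def
  have hlow : ∀ q ∈ ball (0:ℂ) 4⁻¹ \ {0}, ε ≤ ‖hraw g q - c0‖ := by
    intro q hq
    by_contra hlt
    push_neg at hlt
    have : hraw g q ∈ ball c0 ε := by rwa [mem_ball, dist_eq_norm]
    obtain ⟨x, hxB, hxeq⟩ := hball this
    obtain ⟨hxV, hxn⟩ := hBV x hxB
    obtain ⟨hq1, hq2⟩ := hq
    rw [mem_ball_zero_iff] at hq1
    rw [mem_singleton_iff] at hq2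
    have hqV : q ∈ ball (0:ℂ) 1 \ {0} := by
      refine ⟨mem_ball_zero_iff.mpr (by linarith [hq1]; ), hq2⟩
    have : x = q := hraw_inj g hinj hper hxV hqV hxeq
    rw [this] at hxn
    linarith
  -- removable singularity for 1/(hraw - c0)
  set f : ℂ → ℂ := fun q => (hraw g q - c0)⁻¹ with hfdef
  have hWV : (ball (0:ℂ) 4⁻¹ \ {0}) ⊆ (ball (0:ℂ) 1 \ {0}) := by
    intro x hx
    obtain ⟨h1, h2⟩ := hx
    rw [mem_ball_zero_iff] at h1
    exact ⟨mem_ball_zero_iff.mpr (by linarith), h2⟩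
  have hne : ∀ q ∈ ball (0:ℂ) 4⁻¹ \ {0}, hraw g q - c0 ≠ 0 := by
    intro q hq
    have := hlow q hq
    intro h0
    rw [h0] at this
    simp at this
    linarith
  have hfd : DifferentiableOn ℂ f (ball (0:ℂ) 4⁻¹ \ {0}) :=
    DifferentiableOn.inv ((hdV.mono hWV).sub_const c0) hne
  have hbdd : BddAbove (norm ∘ f '' (ball (0:ℂ) 4⁻¹ \ {0})) := by
    refine ⟨ε⁻¹, ?_⟩
    rintro - ⟨q, hq, rfl⟩
    simp only [Function.comp_apply, hfdef, norm_inv]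
    exact inv_anti₀ hε (hlow q hq)
  have hc : ball (0:ℂ) 4⁻¹ ∈ 𝓝 (0:ℂ) := ball_mem_nhds _ (by norm_num)
  have HF := Complex.differentiableOn_update_limUnder_of_bddAbove hc hfd hbdd
  set F := Function.update f 0 (limUnder (𝓝[≠] (0:ℂ)) f) with hFdef
  have hFanal : AnalyticAt ℂ F 0 := HF.analyticAt hc
  have hFf : ∀ q : ℂ, q ≠ 0 → F q = f q := fun q hq => Function.update_of_ne hq _ _
  have hWnhds : (ball (0:ℂ) 4⁻¹ \ {0}) ∈ 𝓝[≠] (0:ℂ) :=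
    diff_mem_nhdsWithin_compl hc {0}
  have hfne : ∀ q ∈ ball (0:ℂ) 4⁻¹ \ {0}, f q ≠ 0 := by
    intro q hq
    exact inv_ne_zero (hne q hq)
  have hFne0 : ¬ (∀ᶠ q in 𝓝 (0:ℂ), F q = 0) := by
    intro h
    have h1 : ∀ᶠ q in 𝓝[≠] (0:ℂ), F q = 0 := h.filter_mono nhdsWithin_le_nhds
    have h2 : ∀ᶠ q in 𝓝[≠] (0:ℂ), q ∈ ball (0:ℂ) 4⁻¹ \ {0} := hWnhds
    obtain ⟨q, hq1, hq2⟩ := (h1.and h2).exists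
    have hq0 : q ≠ 0 := hq2.2
    rw [hFf q hq0] at hq1
    exact hfne q hq2 hq1
  obtain ⟨j, u, hu_an, hu0, hu_eq⟩ :=
    hFanal.exists_eventuallyEq_pow_smul_nonzero_iff.mpr hFne0
  -- eventually, hraw = q ^ (-j) * W1 q
  set W1 : ℂ → ℂ := fun q => c0 * q ^ j + (u q)⁻¹ with hW1def
  have hW1an : AnalyticAt ℂ W1 0 := by
    exact ((analyticAt_const.mul ((analyticAt_id).pow j)).add (hu_an.inv hu0))
  have hu_ne : ∀ᶠ q in 𝓝 (0:ℂ), u q ≠ 0 := hu_an.continuousAt.eventually_ne hu0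
  have hev : ∀ᶠ q in 𝓝[≠] (0:ℂ), hraw g q = q ^ (-(j:ℤ)) * W1 q := by
    have h1 : ∀ᶠ q in 𝓝[≠] (0:ℂ), F q = q ^ j * u q := by
      filter_upwards [hu_eq.filter_mono nhdsWithin_le_nhds] with q hq
      simpa [smul_eq_mul] using hq
    filter_upwards [h1, hu_ne.filter_mono nhdsWithin_le_nhds, hWnhds,
      self_mem_nhdsWithin] with q hFq huq hqW hq0
    have hq0' : (q:ℂ) ≠ 0 := hq0
    have hfq : f q = q ^ j * u q := by rw [← hFf q hq0', hFq]
    have hiv : hraw g q = c0 + (q ^ j * u q)⁻¹ := by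
      rw [← hfq, hfdef]
      simp only []
      rw [inv_inv]
      ring
    rw [hiv, hW1def]
    have hqj : q ^ j ≠ 0 := pow_ne_zero _ hq0'
    rw [zpow_neg, zpow_natCast]
    field_simp
  by_cases hW10 : W1 0 = 0
  · -- further factor W1
    have hW1ne0 : ¬ (∀ᶠ q in 𝓝 (0:ℂ), W1 q = 0) := by
      intro h
      have h1 : ∀ᶠ q in 𝓝[≠] (0:ℂ), W1 q = 0 := h.filter_mono nhdsWithin_le_nhds
      obtain ⟨q, hq1, hq2, hq3⟩ := (h1.and (hev.and self_mem_nhdsWithin)).exists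
      have : hraw g q = 0 := by rw [hq2, hq1, mul_zero]
      exact hraw_ne g q this
    obtain ⟨m, v, hv_an, hv0, hv_eq⟩ :=
      hW1an.exists_eventuallyEq_pow_smul_nonzero_iff.mpr hW1ne0
    refine ⟨-(j:ℤ) + m, v, hv_an, hv0, ?_⟩
    filter_upwards [hev, hv_eq.filter_mono nhdsWithin_le_nhds,
      self_mem_nhdsWithin] with q h1 h2 hq0
    have hq0' : (q:ℂ) ≠ 0 := hq0
    rw [h1]
    simp only [sub_zero, smul_eq_mul] at h2
    rw [h2, zpow_add₀ hq0', zpow_natCast]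
    ring
  · exact ⟨-(j:ℤ), W1, hW1an, hW10, hev⟩

lemma slit_of_close {y : ℂ} (h : ‖y - 1‖ < 1) : y ∈ Complex.slitPlane := by
  rw [Complex.mem_slitPlane_iff]
  left
  have h1 : |(y - 1).re| ≤ ‖y - 1‖ := Complex.abs_re_le_norm _
  have h2 : (y - 1).re = y.re - 1 := by simp
  have h3 : |y.re - 1| < 1 := by rw [← h2]; exact lt_of_le_of_lt h1 h
  have := abs_lt.mp h3
  linarith [this.1]

lemma factor_exp_one (hdiff : DifferentiableOn ℂ g {z : ℂ | 0 < z.im})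
    (hper : ∀ z : ℂ, 0 < z.im → g (z + 1) = g z + 1)
    (k : ℤ) (w : ℂ → ℂ) (hw_an : AnalyticAt ℂ w 0) (hw0 : w 0 ≠ 0)
    (hev : ∀ᶠ q in 𝓝[≠] (0:ℂ), hraw g q = q ^ k * w q) : k = 1 := by
  -- gather eventual properties near 0
  have P1 : ∀ᶠ q in 𝓝 (0:ℂ), AnalyticAt ℂ w q := hw_an.eventually_analyticAt
  have hballw : ∀ᶠ y in 𝓝 (w 0), ‖y - w 0‖ < ‖w 0‖ := by
    filter_upwards [ball_mem_nhds (w 0) (norm_pos_iff.mpr hw0)] with y hy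
    rwa [mem_ball, dist_eq_norm] at hy
  have P2 : ∀ᶠ q in 𝓝 (0:ℂ), ‖w q - w 0‖ < ‖w 0‖ := hw_an.continuousAt.eventually hballw
  have P3 : ∀ᶠ q in 𝓝 (0:ℂ), q ≠ 0 → hraw g q = q ^ k * w q :=
    eventually_nhdsWithin_iff.mp hev
  obtain ⟨δ, hδ, hP⟩ := Metric.eventually_nhds_iff.mp ((P1.and P2).and P3)
  set Y := max ((-Real.log δ) / (2 * Real.pi)) 0 with hYdef
  have h2π : (0:ℝ) < 2 * Real.pi := by positivity
  have hsmall : ∀ z : ℂ, Y < z.im → dist (ee z) 0 < δ := by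
    intro z hz
    rw [dist_zero_right, abs_ee]
    have h1 : (-Real.log δ) / (2 * Real.pi) < z.im := lt_of_le_of_lt (le_max_left _ _) hz
    have h2 : -Real.log δ < 2 * Real.pi * z.im := by
      rw [div_lt_iff₀ h2π] at h1
      linarith
    calc Real.exp (-(2 * Real.pi * z.im)) < Real.exp (Real.log δ) := by
          apply Real.exp_lt_exp.mpr; linarith
      _ = δ := Real.exp_log hδ
  have hYpos : ∀ z : ℂ, Y < z.im → 0 < z.im := fun z hz =>
    lt_of_le_of_lt (le_max_right _ _) hz
  set S : Set ℂ := {z : ℂ | Y < z.im} with hSdef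
  have hSmem : ∀ z : ℂ, z ∈ S ↔ Y < z.im := fun z => Iff.rfl
  have hwne : ∀ z ∈ S, w (ee z) ≠ 0 := by
    intro z hz h0
    have := ((hP (hsmall z hz)).1).2
    rw [h0] at this
    simp at this
  have hslit : ∀ z ∈ S, w (ee z) / w 0 ∈ Complex.slitPlane := by
    intro z hz
    apply slit_of_close
    have h1 := ((hP (hsmall z hz)).1).2
    have : w (ee z) / w 0 - 1 = (w (ee z) - w 0) / w 0 := by field_simp
    rw [this, norm_div]
    rw [div_lt_one (norm_pos_iff.mpr hw0)]
    exact h1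
  set Φ : ℂ → ℂ := fun z => cc * (g z - k * z) - Complex.log (w (ee z) / w 0) with hΦdef
  have hΦexp : ∀ z ∈ S, Complex.exp (Φ z) = w 0 := by
    intro z hz
    have hz0 := hYpos z hz
    have heq : ee (g z) = (ee z) ^ k * w (ee z) := by
      rw [← hraw_spec g hper hz0]
      exact (hP (hsmall z hz)).2 (ee_ne z)
    have hzk : (ee z) ^ k ≠ 0 := zpow_ne_zero _ (ee_ne z)
    have hwz := hwne z hz
    have hdiv : w (ee z) / w 0 ≠ 0 := div_ne_zero hwz hw0
    rw [hΦdef]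
    simp only []
    rw [Complex.exp_sub, Complex.exp_log hdiv]
    have hmul : cc * (g z - k * z) = cc * g z - (k:ℂ) * (cc * z) := by ring
    rw [hmul, Complex.exp_sub, Complex.exp_int_mul]
    have h1 : Complex.exp (cc * g z) = ee (g z) := rfl
    have h2 : Complex.exp (cc * z) = ee z := rfl
    rw [h1, h2, heq]
    field_simp
  have hn : ∀ z ∈ S, ∃ n : ℤ, Φ z = Complex.log (w 0) + n * (2 * Real.pi * I) := by
    intro z hz
    apply Complex.exp_eq_exp_iff_exists_int.mp
    rw [hΦexp z hz, Complex.exp_log hw0]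
  set ψ : ℂ → ℝ := fun z => ((Φ z - Complex.log (w 0)) / cc).re with hψdef
  have hψint : ∀ z ∈ S, ∃ n : ℤ, ψ z = n := by
    intro z hz
    obtain ⟨n, hn'⟩ := hn z hz
    refine ⟨n, ?_⟩
    rw [hψdef]
    simp only []
    rw [hn']
    have : Complex.log (w 0) + n * (2 * Real.pi * I) - Complex.log (w 0) = n * cc := by
      rw [cc]; ring
    rw [this, mul_div_assoc, div_self cc_ne, mul_one]
    simp
  have hSopen : IsOpen S := isOpen_lt continuous_const Complex.continuous_im
  have hee_cont : Continuous ee := by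
    exact Complex.continuous_exp.comp (continuous_const.mul continuous_id)
  have hψcont : ContinuousOn ψ S := by
    intro z hz
    apply ContinuousAt.continuousWithinAt
    have hcg : ContinuousAt g z :=
      (hdiff.differentiableAt (isOpen_halfplane.mem_nhds (hYpos z hz))).continuousAt
    have hcw : ContinuousAt w (ee z) := ((hP (hsmall z hz)).1).1.continuousAt
    have hclog : ContinuousAt Complex.log (w (ee z) / w 0) :=
      continuousAt_clog (hslit z hz)
    have hc1 : ContinuousAt (fun z => w (ee z) / w 0) z :=
      (hcw.comp hee_cont.continuousAt).div_const _
    have hc2 : ContinuousAt (fun z => Complex.log (w (ee z) / w 0)) z := ContinuousAt.comp (g := Complex.log) (x := z) hclog hc1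
    have hcΦ : ContinuousAt Φ z := by
      rw [hΦdef]
      exact (continuousAt_const.mul (hcg.sub (continuousAt_const.mul continuousAt_id))).sub hc2
    exact Complex.continuous_re.continuousAt.comp ((hcΦ.sub continuousAt_const).div_const _)
  set z0 : ℂ := (Y + 1 : ℝ) * I with hz0def
  have hz0im : z0.im = Y + 1 := by rw [hz0def]; simp
  have hz0S : z0 ∈ S := by rw [hSmem, hz0im]; linarith
  have hz1S : z0 + 1 ∈ S := by
    rw [hSmem, Complex.add_im, hz0im]
    simp
  -- ψ is constant on S by the intermediate value theorem
  have hψeq : ψ z0 = ψ (z0 + 1) := by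
    by_contra hne
    obtain ⟨n1, hn1⟩ := hψint z0 hz0S
    obtain ⟨n2, hn2⟩ := hψint (z0+1) hz1S
    have hSpre : IsPreconnected S := (convex_halfSpace_im_gt Y).isPreconnected
    have key : ∀ (a b : ℂ) (m1 m2 : ℤ), a ∈ S → b ∈ S → ψ a = m1 → ψ b = m2 →
        m1 < m2 → False := by
      intro a b m1 m2 haS hbS ha hb hlt
      have hmem : ((m2:ℝ) - 2⁻¹) ∈ Icc (ψ a) (ψ b) := by
        rw [ha, hb]
        constructor
        · have : (m1:ℝ) ≤ (m2:ℝ) - 1 := by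
            have : m1 ≤ m2 - 1 := by omega
            exact_mod_cast this
          linarith
        · linarith
      obtain ⟨z', hz'S, hz'⟩ := hSpre.intermediate_value haS hbS hψcont hmem
      obtain ⟨m, hm⟩ := hψint z' hz'S
      rw [hz'] at hm
      have : ((2*m : ℤ) : ℝ) = ((2*m2 - 1 : ℤ) : ℝ) := by push_cast; linarith
      have := Int.cast_injective this
      omega
    rcases lt_trichotomy n1 n2 with h | h | h
    · exact key z0 (z0+1) n1 n2 hz0S hz1S hn1 hn2 h
    · apply hne; rw [hn1, hn2, h]
    · exact key (z0+1) z0 n2 n1 hz1S hz0S hn2 hn1 h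
  -- compute ψ z0 - ψ (z0 + 1)
  have heeper : ee (z0 + 1) = ee z0 := by
    have := ee_add_int z0 1
    simpa using this
  have hgper : g (z0 + 1) = g z0 + 1 := hper z0 (hYpos z0 hz0S)
  have key : Φ z0 - Φ (z0 + 1) = cc * ((k:ℂ) - 1) := by
    rw [hΦdef]
    simp only []
    rw [heeper, hgper]
    ring
  have hψdiff : ψ z0 - ψ (z0 + 1) = (k:ℝ) - 1 := by
    rw [hψdef]
    simp only []
    rw [← Complex.sub_re, div_sub_div_same]
    have h1 : Φ z0 - Complex.log (w 0) - (Φ (z0+1) - Complex.log (w 0)) = Φ z0 - Φ (z0+1) := by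
      ring
    rw [h1, key, mul_div_cancel_left₀ _ cc_ne]
    simp
  rw [hψeq] at hψdiff
  simp at hψdiff
  have hk : (k:ℝ) = 1 := by linarith
  exact_mod_cast hk

end G

end Stmt2Aux

/-- If `g : ℍ → ℂ` is injective holomorphic with `g(z+1) = g(z)+1`, then the induced map
`h` on the punctured unit disk with `h (exp (2πi z)) = exp (2πi g z)` is well-defined,
holomorphic and injective on the punctured disk, and extends holomorphically to `0`
with `h 0 = 0`. -/
theorem stmt2 (g : ℂ → ℂ)
    (hdiff : DifferentiableOn ℂ g {z : ℂ | 0 < z.im})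
    (hinj : Set.InjOn g {z : ℂ | 0 < z.im})
    (hper : ∀ z : ℂ, 0 < z.im → g (z + 1) = g z + 1) :
    ∃ h : ℂ → ℂ,
      DifferentiableOn ℂ h (Metric.ball (0 : ℂ) 1) ∧
      Set.InjOn h (Metric.ball (0 : ℂ) 1 \ {0}) ∧
      h 0 = 0 ∧
      ∀ z : ℂ, 0 < z.im →
        h (Complex.exp (2 * Real.pi * Complex.I * z)) =
          Complex.exp (2 * Real.pi * Complex.I * g z) := by
  classical
  open Stmt2Aux in
  obtain ⟨k, w, hw_an, hw0, hev⟩ := Stmt2Aux.hraw_factor_zpow g hdiff hinj hper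
  have hk : k = 1 := Stmt2Aux.factor_exp_one g hdiff hper k w hw_an hw0 hev
  subst hk
  set h : ℂ → ℂ := Function.update (Stmt2Aux.hraw g) 0 0 with hhdef
  have hupd : ∀ q : ℂ, q ≠ 0 → h q = Stmt2Aux.hraw g q := fun q hq =>
    Function.update_of_ne hq _ _
  have hdV := Stmt2Aux.hraw_diffOn g hdiff hper
  refine ⟨h, ?_, ?_, Function.update_self _ _ _, ?_⟩
  · -- differentiability on the ball
    intro q hq
    by_cases hq0 : q = 0
    · subst hq0
      have hev0 : h =ᶠ[𝓝 (0:ℂ)] (fun x => x * w x) := by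
        filter_upwards [eventually_nhdsWithin_iff.mp hev] with x hx
        by_cases hx0 : x = 0
        · subst hx0
          rw [hhdef, Function.update_self]
          simp
        · rw [hupd x hx0, hx hx0, zpow_one]
      have hd : DifferentiableAt ℂ (fun x : ℂ => x * w x) 0 :=
        differentiableAt_id.mul hw_an.differentiableAt
      exact (hev0.differentiableAt_iff.mpr hd).differentiableWithinAt
    · have hev' : h =ᶠ[𝓝 q] Stmt2Aux.hraw g := by
        filter_upwards [isOpen_compl_singleton.mem_nhds (show q ∈ ({0}ᶜ : Set ℂ) from hq0)] with x hx
        exact hupd x hx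
      have hd : DifferentiableAt ℂ (Stmt2Aux.hraw g) q :=
        hdV.differentiableAt (Stmt2Aux.isOpen_punctball.mem_nhds ⟨hq, hq0⟩)
      exact (hev'.differentiableAt_iff.mpr hd).differentiableWithinAt
  · -- injectivity
    intro a ha b hb hab
    have ha0 : a ≠ 0 := ha.2
    have hb0 : b ≠ 0 := hb.2
    rw [hupd a ha0, hupd b hb0] at hab
    exact Stmt2Aux.hraw_inj g hinj hper ha hb hab
  · -- the defining property
    intro z hz
    have h1 : Complex.exp (2 * Real.pi * Complex.I * z) = Stmt2Aux.ee z := rfl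
    have h2 : Complex.exp (2 * Real.pi * Complex.I * g z) = Stmt2Aux.ee (g z) := rfl
    rw [h1, h2, hupd _ (Stmt2Aux.ee_ne z)]
    exact Stmt2Aux.hraw_spec g hper hz
end

section
/- There exists a universal constant C > 0 such that: for every injective holomorphic map g : ℍ → ℂ satisfying g(z+1) = g(z)+1, there exists α ∈ ℂ such that for all z ∈ ℍ with Im z ≥ C, |g(z) - z + α| ≤ C·exp(-2π·Im z). -/
open Complex Metric Set Function Filter Asymptotics Topology
open scoped Real

noncomputable section

/-- Quantitative open mapping. -/
lemma quantOpen {g : ℂ → ℂ} {z₀ : ℂ} {r : ℝ} (hr : 0 < r)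
    (hd : DifferentiableOn ℂ g (ball z₀ r))
    (hbd : ∀ w ∈ ball z₀ r, ‖deriv g w‖ ≤ 2 * ‖deriv g z₀‖) :
    ball (g z₀) (‖deriv g z₀‖ * r / 80) ⊆ g '' (ball z₀ r) := by
  set μ := ‖deriv g z₀‖ with hμdef
  rcases eq_or_lt_of_le (norm_nonneg (deriv g z₀)) with h0 | hμ
  · rw [← hμdef] at h0
    rw [← h0, zero_mul, zero_div, ball_zero]
    exact empty_subset _
  -- Lipschitz bound for g - g z₀
  have hlip : ∀ w ∈ ball z₀ r, ‖g w - g z₀‖ ≤ 2 * μ * ‖w - z₀‖ := by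
    intro w hw
    exact Convex.norm_image_sub_le_of_norm_deriv_le
      (fun x hx => hd.differentiableAt (isOpen_ball.mem_nhds hx)) hbd
      (convex_ball z₀ r) (mem_ball_self hr) hw
  -- the error term
  set e : ℂ → ℂ := fun w => g w - g z₀ - deriv g z₀ * (w - z₀) with he
  have hde : DifferentiableOn ℂ e (ball z₀ r) := by
    intro w hw
    exact ((hd w hw).sub (differentiableWithinAt_const _)).sub
      ((differentiableWithinAt_const _).mul ((differentiableWithinAt_id.sub
        (differentiableWithinAt_const _))))
  have he0 : e z₀ = 0 := by simp [he]
  have hde0 : deriv e z₀ = 0 := by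
    have h1 : HasDerivAt g (deriv g z₀) z₀ :=
      (hd.differentiableAt (isOpen_ball.mem_nhds (mem_ball_self hr))).hasDerivAt
    have h2 : HasDerivAt e (deriv g z₀ - (deriv g z₀ * 1 - 0)) z₀ := by
      refine ((h1.sub_const _).sub ?_)
      exact (hasDerivAt_id z₀).sub_const z₀ |>.const_mul _ |>.congr_deriv (by ring)
    simpa using h2.deriv
  have hebd : ∀ w ∈ ball z₀ r, ‖e w‖ < 4 * μ * r := by
    intro w hw
    have h1 : ‖e w‖ ≤ 2 * μ * ‖w - z₀‖ + μ * ‖w - z₀‖ := by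
      have := hlip w hw
      calc ‖e w‖ ≤ ‖g w - g z₀‖ + ‖deriv g z₀ * (w - z₀)‖ := norm_sub_le _ _
        _ ≤ 2 * μ * ‖w - z₀‖ + μ * ‖w - z₀‖ := by
            rw [norm_mul, ← hμdef]; exact add_le_add this le_rfl
    have h2 : ‖w - z₀‖ < r := mem_ball_iff_norm.mp hw
    nlinarith [norm_nonneg (w - z₀)]
  -- first dslope
  set e₁ := dslope e z₀ with he₁
  have hde₁ : DifferentiableOn ℂ e₁ (ball z₀ r) :=
    (differentiableOn_dslope (ball_mem_nhds z₀ hr)).mpr hde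
  have he₁0 : e₁ z₀ = 0 := by rw [he₁, dslope_same]; exact hde0
  have hbd₁ : ∀ w ∈ ball z₀ r, ‖e₁ w‖ ≤ 4 * μ := by
    intro w hw
    have hmaps : MapsTo e (ball z₀ r) (ball (e z₀) (4 * μ * r)) := by
      intro u hu
      rw [mem_ball, dist_eq_norm, he0, sub_zero]
      exact hebd u hu
    have h := Complex.norm_dslope_le_div_of_mapsTo_ball hde (hmaps.mono_right ball_subset_closedBall) hw
    calc ‖e₁ w‖ ≤ 4 * μ * r / r := h
      _ = 4 * μ := by field_simp
  have hbd₂ : ∀ w ∈ ball z₀ r, ‖e₁ w‖ ≤ 5 * μ / r * ‖w - z₀‖ := by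
    intro w hw
    have hmaps : MapsTo e₁ (ball z₀ r) (ball (e₁ z₀) (5 * μ)) := by
      intro u hu
      rw [mem_ball, he₁0, dist_zero_right]
      exact lt_of_le_of_lt (hbd₁ u hu) (by nlinarith)
    have h := Complex.dist_le_div_mul_dist_of_mapsTo_ball hde₁ (hmaps.mono_right ball_subset_closedBall) hw
    simpa [he₁0, dist_eq_norm, sub_zero] using h
  have hebd2 : ∀ w ∈ ball z₀ r, ‖e w‖ ≤ 5 * μ / r * ‖w - z₀‖ ^ 2 := by
    intro w hw
    rcases eq_or_ne w z₀ with rfl | hne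
    · simp [he0]
    · have hew : e w = (w - z₀) * e₁ w := by
        rw [he₁, dslope_of_ne _ hne, slope_def_field, he0, sub_zero,
          mul_comm, div_mul_cancel₀ _ (sub_ne_zero.mpr hne)]
      rw [hew, norm_mul]
      calc ‖w - z₀‖ * ‖e₁ w‖ ≤ ‖w - z₀‖ * (5 * μ / r * ‖w - z₀‖) := by
            exact mul_le_mul_of_nonneg_left (hbd₂ w hw) (norm_nonneg _)
        _ = 5 * μ / r * ‖w - z₀‖ ^ 2 := by ring
  -- lower bound on the sphere of radius r/20
  set s : ℝ := r / 20 with hs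
  have hs0 : 0 < s := by positivity
  have hsr : s < r := by rw [hs]; linarith
  have hlb : ∀ w : ℂ, ‖w - z₀‖ = s → (3 / 4) * μ * s ≤ ‖g w - g z₀‖ := by
    intro w hw
    have hwmem : w ∈ ball z₀ r := by rw [mem_ball, dist_eq_norm, hw]; exact hsr
    have h1 : ‖e w‖ ≤ 5 * μ / r * s ^ 2 := by rw [← hw]; exact hebd2 w hwmem
    have h2 : g w - g z₀ = deriv g z₀ * (w - z₀) + e w := by rw [he]; ring
    have h3 : ‖deriv g z₀ * (w - z₀)‖ = μ * s := by rw [norm_mul, ← hμdef, hw]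
    have h4 : ‖deriv g z₀ * (w - z₀)‖ ≤ ‖g w - g z₀‖ + ‖e w‖ := by
      rw [h2]; simpa using norm_sub_le (deriv g z₀ * (w - z₀) + e w) (e w)
    have h5 : 5 * μ / r * s ^ 2 = μ * s / 4 := by rw [hs]; field_simp; ring
    rw [h3] at h4
    rw [h5] at h1
    linarith
  -- minimum modulus argument
  intro w₀ hw₀
  rw [mem_ball, dist_eq_norm] at hw₀
  have hδ : ‖deriv g z₀‖ * r / 80 = μ * s / 4 := by rw [hs, ← hμdef]; ring
  rw [hδ] at hw₀
  by_contra hcon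
  have hnz : ∀ w ∈ closedBall z₀ s, g w - w₀ ≠ 0 := by
    intro w hw hzero
    exact hcon ⟨w, (closedBall_subset_ball hsr) hw, sub_eq_zero.mp hzero⟩
  have hsub : closedBall z₀ s ⊆ ball z₀ r := closedBall_subset_ball hsr
  have hG : DiffContOnCl ℂ (fun w => (g w - w₀)⁻¹) (ball z₀ s) := by
    refine DifferentiableOn.diffContOnCl ?_
    rw [closure_ball z₀ hs0.ne']
    exact ((hd.mono hsub).sub (differentiableOn_const _)).inv hnz
  have hc0 : g z₀ - w₀ ≠ 0 := hnz z₀ (mem_closedBall_self hs0.le)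
  have hkey : ∀ w ∈ frontier (ball z₀ s), ‖(g w - w₀)⁻¹‖ ≤ (μ * s / 2)⁻¹ := by
    intro w hw
    rw [frontier_ball z₀ hs0.ne'] at hw
    have hws : ‖w - z₀‖ = s := by rwa [mem_sphere_iff_norm] at hw
    have h1 := hlb w hws
    have h2 : μ * s / 2 ≤ ‖g w - w₀‖ := by
      have he' : g w - w₀ = (g w - g z₀) - (w₀ - g z₀) := by ring
      rw [he']
      have h3 := norm_sub_norm_le (g w - g z₀) (w₀ - g z₀)
      linarith
    rw [norm_inv]
    exact inv_anti₀ (by positivity) h2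
  have hctr := Complex.norm_le_of_forall_mem_frontier_norm_le isBounded_ball hG hkey
      (by rw [closure_ball z₀ hs0.ne']; exact mem_closedBall_self hs0.le)
  rw [norm_inv] at hctr
  have hpos : 0 < ‖g z₀ - w₀‖ := norm_pos_iff.mpr hc0
  have h6 : μ * s / 2 ≤ ‖g z₀ - w₀‖ := by
    have hp2 : (0:ℝ) < μ * s / 2 := by positivity
    by_contra hlt
    push_neg at hlt
    have := inv_strictAnti₀ hpos hlt
    linarith
  have h7 : ‖w₀ - g z₀‖ = ‖g z₀ - w₀‖ := norm_sub_rev _ _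
  rw [h7] at hw₀
  nlinarith


/-- Universal derivative bound for univalent maps commuting with translation. -/
lemma derivBound {g : ℂ → ℂ} (hd : DifferentiableOn ℂ g {z : ℂ | 0 < z.im})
    (hinj : Set.InjOn g {z : ℂ | 0 < z.im})
    (hper : ∀ z : ℂ, 0 < z.im → g (z + 1) = g z + 1)
    {z : ℂ} (hz : 1/2 ≤ z.im) : ‖deriv g z‖ ≤ 640 := by
  have hopen : IsOpen {z : ℂ | 0 < z.im} := by
    exact isOpen_lt continuous_const Complex.continuous_im
  have hball : closedBall z (1/4) ⊆ {z : ℂ | 0 < z.im} := by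
    intro w hw
    rw [mem_closedBall, dist_eq_norm] at hw
    have him : |w.im - z.im| ≤ 1/4 := by
      calc |w.im - z.im| = |(w - z).im| := by rw [Complex.sub_im]
        _ ≤ ‖w - z‖ := Complex.abs_im_le_norm _
        _ ≤ 1/4 := hw
    have := abs_le.mp him
    simp only [mem_setOf_eq]
    linarith
  have hderivcont : ContinuousOn (deriv g) {z : ℂ | 0 < z.im} :=
    ((hd.analyticOnNhd hopen).deriv).continuousOn
  -- the Bloch function φ
  set φ : ℂ → ℝ := fun w => ‖deriv g w‖ * (1/4 - dist w z) with hφ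
  have hφcont : ContinuousOn φ (closedBall z (1/4)) := by
    apply ContinuousOn.mul
    · exact ((hderivcont.mono hball).norm)
    · exact (continuous_const.sub (continuous_id.dist continuous_const)).continuousOn
  obtain ⟨z₀, hz₀mem, hmax⟩ := (isCompact_closedBall z (1/4)).exists_isMaxOn
    ⟨z, mem_closedBall_self (by norm_num)⟩ hφcont
  have hφz : φ z = ‖deriv g z‖ * (1/4) := by simp [hφ]
  have hφz₀ := hmax (mem_closedBall_self (show (0:ℝ) ≤ 1/4 by norm_num))
  -- i.e. φ z ≤ φ z₀
  set μ := ‖deriv g z₀‖ with hμ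
  set r₀ : ℝ := (1/4 - dist z₀ z)/2 with hr₀
  have hdz₀ : dist z₀ z ≤ 1/4 := mem_closedBall.mp hz₀mem
  have hr₀nonneg : 0 ≤ r₀ := by rw [hr₀]; linarith
  have hφz₀eq : φ z₀ = μ * (2 * r₀) := by rw [hφ, hr₀, hμ]; ring_nf
  rcases eq_or_lt_of_le (by positivity : (0:ℝ) ≤ μ * (2*r₀)) with hzero | hposs
  · -- φ z₀ = 0 forces deriv g z = 0
    have h : φ z ≤ φ z₀ := hφz₀
    rw [hφz₀eq, ← hzero] at h
    have : φ z ≤ 0 := h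
    rw [hφz] at this
    have : ‖deriv g z‖ ≤ 0 := by nlinarith
    linarith [norm_nonneg (deriv g z)]
  have hr₀pos : 0 < r₀ := by nlinarith [norm_nonneg (deriv g z₀)]
  have hμpos : 0 < μ := by nlinarith
  -- ball z₀ r₀ ⊆ closedBall z (1/4) ⊆ ℍ
  have hsub : ball z₀ r₀ ⊆ closedBall z (1/4) := by
    intro w hw
    rw [mem_ball] at hw
    rw [mem_closedBall]
    calc dist w z ≤ dist w z₀ + dist z₀ z := dist_triangle _ _ _
      _ ≤ 1/4 := by rw [hr₀] at hw; linarith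
  -- derivative bound on ball z₀ r₀
  have hbd2 : ∀ w ∈ ball z₀ r₀, ‖deriv g w‖ ≤ 2 * μ := by
    intro w hw
    have h1 : φ w ≤ φ z₀ := hmax (hsub hw)
    have h2 : r₀ < 1/4 - dist w z := by
      rw [mem_ball] at hw
      have := dist_triangle w z₀ z
      rw [hr₀] at hw ⊢
      linarith
    simp only [hφ] at h1
    rw [← hμ] at h1
    have h3 : 2*r₀ = 1/4 - dist z₀ z := by rw [hr₀]; ring
    nlinarith [norm_nonneg (deriv g w), hr₀pos]
  have himg := quantOpen hr₀pos (hd.mono (fun w hw => hball (hsub hw))) hbd2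
  -- injectivity & translation
  have hz₀im : 0 < z₀.im := hball hz₀mem
  by_contra hcon
  push_neg at hcon
  have hkey : (1:ℝ) < μ * r₀ / 80 := by
    have : φ z ≤ φ z₀ := hφz₀
    rw [hφz, hφz₀eq] at this
    nlinarith
  have hin : g z₀ + 1 ∈ ball (g z₀) (μ * r₀ / 80) := by
    rw [mem_ball, dist_eq_norm]
    simpa using hkey
  obtain ⟨w₁, hw₁mem, hw₁⟩ := himg hin
  have : w₁ = z₀ + 1 := by
    apply hinj (hball (hsub hw₁mem)) (by simp only [mem_setOf_eq, add_im, one_im]; simpa using hz₀im)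
    rw [hw₁, hper z₀ hz₀im]
  rw [this] at hw₁mem
  rw [mem_ball, dist_eq_norm] at hw₁mem
  have : ‖(1:ℂ)‖ < r₀ := by simpa using hw₁mem
  rw [norm_one] at this
  have : r₀ ≤ 1/8 := by rw [hr₀]; linarith [dist_nonneg (x := z₀) (y := z)]
  linarith

lemma derivDecay {g : ℂ → ℂ} (hd : DifferentiableOn ℂ g {z : ℂ | 0 < z.im})
    (hinj : Set.InjOn g {z : ℂ | 0 < z.im})
    (hper : ∀ z : ℂ, 0 < z.im → g (z + 1) = g z + 1) :
    ∀ z : ℂ, 1/2 < z.im →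
      ‖deriv g z - 1‖ ≤ 642 * Real.exp Real.pi * Real.exp (-(2*Real.pi*z.im)) := by
  have hopen : IsOpen {z : ℂ | 0 < z.im} := isOpen_lt continuous_const Complex.continuous_im
  have han := (hd.analyticOnNhd hopen).deriv
  have hderivdiff : ∀ z : ℂ, 0 < z.im → DifferentiableAt ℂ (deriv g) z :=
    fun z hz => (han z hz).differentiableAt
  have hdperiod : ∀ z : ℂ, 0 < z.im → deriv g (z + 1) = deriv g z := by
    intro z hz
    have hev : (fun w => g (w + 1)) =ᶠ[𝓝 z] fun w => g w + 1 :=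
      eventually_of_mem (hopen.mem_nhds hz) (fun w hw => hper w hw)
    have h1 : deriv (fun w => g (w + 1)) z = deriv (fun w => g w + 1) z := hev.deriv_eq
    rw [deriv_add_const] at h1
    rw [← h1]
    have h2 : HasDerivAt g (deriv g (z+1)) (z+1) := by
      apply DifferentiableAt.hasDerivAt
      apply hd.differentiableAt (hopen.mem_nhds ?_)
      simpa using hz
    exact ((h2.comp_add_const z 1).deriv).symm
  set f : ℂ → ℂ := fun z => if 0 < z.im then deriv g z - 1 else 0 with hf
  have hfper : Function.Periodic f 1 := by
    intro z
    by_cases hz : 0 < z.im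
    · simp only [hf]
      rw [if_pos (by simpa using hz), if_pos hz, hdperiod z hz]
    · simp only [hf]
      rw [if_neg (by simpa using hz), if_neg hz]
  have hfeq : ∀ z : ℂ, 0 < z.im → f =ᶠ[𝓝 z] fun w => deriv g w - 1 := fun z hz =>
    eventually_of_mem (hopen.mem_nhds hz) (fun w hw => if_pos hw)
  have hfdiff : ∀ z : ℂ, 0 < z.im → DifferentiableAt ℂ f z := fun z hz =>
    (((hderivdiff z hz).sub_const 1).congr_of_eventuallyEq (hfeq z hz))
  have hfbdd : ∀ z : ℂ, 1/2 ≤ z.im → ‖f z‖ ≤ 641 := by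
    intro z hz
    simp only [hf]
    rw [if_pos (by linarith : 0 < z.im)]
    calc ‖deriv g z - 1‖ ≤ ‖deriv g z‖ + ‖(1:ℂ)‖ := norm_sub_le _ _
      _ ≤ 640 + 1 := by
          have := derivBound hd hinj hper hz
          rw [norm_one]; linarith
      _ = 641 := by norm_num
  have hIdiff : ∀ᶠ z in comap Complex.im atTop, DifferentiableAt ℂ f z := by
    rw [eventually_comap]
    filter_upwards [eventually_ge_atTop (1:ℝ)] with y hy z hz
    exact hfdiff z (by rw [hz]; linarith)
  have hIbd : Filter.BoundedAtFilter (comap Complex.im atTop) f := by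
    refine Asymptotics.IsBigO.of_bound 641 ?_
    rw [eventually_comap]
    filter_upwards [eventually_ge_atTop (1:ℝ)] with y hy z hz
    simpa using hfbdd z (by rw [hz]; linarith)
  set Φ := Function.Periodic.cuspFunction 1 f with hΦ
  have hΦ0diff : DifferentiableAt ℂ Φ 0 :=
    Function.Periodic.differentiableAt_cuspFunction_zero one_pos hfper hIdiff hIbd
  have htend : Tendsto f (comap Complex.im atTop) (𝓝 (Φ 0)) :=
    Function.Periodic.tendsto_at_I_inf one_pos hfper hIdiff hIbd
  -- continuity of t ↦ f(t + y I)
  have hcontf : ∀ y : ℝ, 1/2 < y → ContinuousOn (fun t : ℝ => f (↑t + ↑y*I)) (uIcc (0:ℝ) 1) := by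
    intro y hy
    have h1 : ContinuousOn (fun t : ℝ => deriv g (↑t + ↑y*I) - 1) (uIcc (0:ℝ) 1) := by
      apply ContinuousOn.sub _ continuousOn_const
      apply han.continuousOn.comp
      · exact (Complex.continuous_ofReal.add continuous_const).continuousOn
      · intro t _
        simp only [mem_setOf_eq, add_im, ofReal_im, mul_im, ofReal_re, I_im, I_re, mul_one,
          mul_zero, ofReal_im]
        simp only [zero_add]
        nlinarith
    apply h1.congr
    intro t _
    simp only [hf]
    rw [if_pos]
    simp only [add_im, ofReal_im, mul_im, ofReal_re, I_im, I_re, mul_one, mul_zero]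
    nlinarith
  have hint0 : ∀ y : ℝ, 1/2 < y → ∫ t in (0:ℝ)..1, f (↑t + ↑y * I) = 0 := by
    intro y hy
    have him : ∀ t : ℝ, ((t:ℂ) + (y:ℂ) * I).im = y := by
      intro t; simp
    have hderivs : ∀ t ∈ uIcc (0:ℝ) 1,
        HasDerivAt (fun s : ℝ => g (↑s + ↑y*I) - (↑s + ↑y*I)) (f (↑t + ↑y*I)) t := by
      intro t _
      have h0 : (0:ℝ) < ((t:ℂ) + (y:ℂ)*I).im := by rw [him]; linarith
      have h1 : HasDerivAt g (deriv g (↑t + ↑y*I)) (↑t + ↑y*I) :=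
        (hd.differentiableAt (hopen.mem_nhds h0)).hasDerivAt
      have h2 : HasDerivAt (fun w : ℂ => g w - w) (deriv g (↑t + ↑y*I) - 1) (↑t + ↑y*I) :=
        h1.sub (hasDerivAt_id _)
      have h3 : HasDerivAt (fun w : ℂ => g (w + ↑y*I) - (w + ↑y*I))
          (deriv g (↑t + ↑y*I) - 1) ↑t := h2.comp_add_const _ _
      have h4 := h3.comp_ofReal
      simp only [hf]
      rw [if_pos h0]
      exact h4
    have hFTC := intervalIntegral.integral_eq_sub_of_hasDerivAt hderivs
      ((hcontf y hy).intervalIntegrable)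
    rw [hFTC]
    have him0 : (0:ℝ) < ((y:ℂ)*I).im := by simp; linarith
    have h5 : g ((1:ℂ) + ↑y*I) = g (↑y*I) + 1 := by
      rw [add_comm]; exact hper _ him0
    push_cast
    rw [zero_add, h5]
    ring
  have hc₀ : Φ 0 = 0 := by
    by_contra hne
    have hεpos : 0 < ‖Φ 0‖ / 2 := by
      have := norm_pos_iff.mpr hne
      linarith
    have hev := Metric.tendsto_nhds.mp htend _ hεpos
    rw [eventually_comap] at hev
    obtain ⟨Y, hY⟩ := eventually_atTop.mp hev
    set y : ℝ := max Y 1 with hy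
    have hy1 : 1/2 < y := lt_of_lt_of_le (by norm_num) (le_max_right _ _)
    have h1 : ∀ t ∈ Set.uIoc (0:ℝ) 1, ‖Φ 0 - f (↑t + ↑y*I)‖ ≤ ‖Φ 0‖ / 2 := by
      intro t _
      have := hY y (le_max_left _ _) (↑t + ↑y*I) (by simp)
      rw [dist_eq_norm, ← norm_sub_rev] at this
      exact this.le
    have h2 : ∫ t in (0:ℝ)..1, (Φ 0 - f (↑t + ↑y*I)) = Φ 0 := by
      rw [intervalIntegral.integral_sub intervalIntegrable_const
        ((hcontf y hy1).intervalIntegrable), hint0 y hy1, sub_zero,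
        intervalIntegral.integral_const]
      simp
    have h3 := intervalIntegral.norm_integral_le_of_norm_le_const h1
    rw [h2] at h3
    norm_num at h3
    have := norm_pos_iff.mpr hne
    linarith
  -- Schwarz lemma step
  set r₁ : ℝ := Real.exp (-Real.pi) with hr₁
  have hr₁pos : 0 < r₁ := Real.exp_pos _
  have hqim : ∀ q : ℂ, q ≠ 0 → ‖q‖ < r₁ → 1/2 < (Function.Periodic.invQParam 1 q).im := by
    intro q hq0 hqlt
    rw [Function.Periodic.im_invQParam]
    have habs : ‖q‖ < r₁ := hqlt
    have hlog : Real.log ‖q‖ < -Real.pi := by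
      have h := Real.log_lt_log (norm_pos_iff.mpr hq0) habs
      rwa [hr₁, Real.log_exp] at h
    have hpi := Real.pi_pos
    rw [div_mul_eq_mul_div, lt_div_iff₀ (by positivity : (0:ℝ) < 2*Real.pi)]
    nlinarith
  have hΦdiff : DifferentiableOn ℂ Φ (ball 0 r₁) := by
    intro q hq
    rw [mem_ball, dist_zero_right] at hq
    rcases eq_or_ne q 0 with rfl | hq0
    · exact hΦ0diff.differentiableWithinAt
    · have him := hqim q hq0 hq
      have h1 : DifferentiableAt ℂ Φ
          (Function.Periodic.qParam 1 (Function.Periodic.invQParam 1 q)) :=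
        Function.Periodic.differentiableAt_cuspFunction one_ne_zero hfper
          (hfdiff _ (by linarith))
      rw [Function.Periodic.qParam_right_inv one_ne_zero hq0] at h1
      exact h1.differentiableWithinAt
  have hΦmaps : MapsTo Φ (ball 0 r₁) (ball (Φ 0) 642) := by
    intro q hq
    rw [mem_ball, hc₀, dist_zero_right]
    rw [mem_ball, dist_zero_right] at hq
    rcases eq_or_ne q 0 with rfl | hq0
    · rw [hc₀]; norm_num
    · rw [hΦ, Function.Periodic.cuspFunction_eq_of_nonzero _ _ hq0]
      have := hfbdd _ (le_of_lt (hqim q hq0 hq))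
      calc ‖(f ∘ Function.Periodic.invQParam 1) q‖ = ‖f (Function.Periodic.invQParam 1 q)‖ := rfl
        _ ≤ 641 := this
        _ < 642 := by norm_num
  intro z hz
  have hqmem : Function.Periodic.qParam 1 z ∈ ball 0 r₁ := by
    rw [mem_ball, dist_zero_right, Function.Periodic.norm_qParam]
    rw [hr₁, Real.exp_lt_exp]
    have hpi := Real.pi_pos
    rw [div_one]
    nlinarith
  have hSch := Complex.dist_le_div_mul_dist_of_mapsTo_ball hΦdiff (hΦmaps.mono_right ball_subset_closedBall) hqmem
  rw [hc₀, dist_zero_right, dist_zero_right] at hSch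
  have hΦq : Φ (Function.Periodic.qParam 1 z) = f z :=
    Function.Periodic.eq_cuspFunction one_ne_zero hfper z
  rw [hΦq] at hSch
  have hfz : f z = deriv g z - 1 := by
    simp only [hf]; rw [if_pos (by linarith : 0 < z.im)]
  rw [hfz] at hSch
  have hnq : ‖Function.Periodic.qParam 1 z‖ = Real.exp (-(2*Real.pi*z.im)) := by
    rw [Function.Periodic.norm_qParam]
    norm_num
  rw [hnq] at hSch
  calc ‖deriv g z - 1‖ ≤ 642 / r₁ * Real.exp (-(2*Real.pi*z.im)) := hSch
    _ = 642 * Real.exp Real.pi * Real.exp (-(2*Real.pi*z.im)) := by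
        rw [hr₁, Real.exp_neg]
        field_simp


lemma vest {g : ℂ → ℂ} {K : ℝ} (hd : DifferentiableOn ℂ g {z : ℂ | 0 < z.im})
    (hK : ∀ z : ℂ, 1/2 < z.im → ‖deriv g z - 1‖ ≤ K * Real.exp (-(2*Real.pi*z.im)))
    {z : ℂ} (hz : 1/2 < z.im) {T₁ T₂ : ℝ} (h0 : 0 ≤ T₁) (h12 : T₁ ≤ T₂) :
    ‖(g (z + T₂*I) - (z + T₂*I)) - (g (z + T₁*I) - (z + T₁*I))‖ ≤
      K/(2*Real.pi) * Real.exp (-(2*Real.pi*(z.im + T₁))) := by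
  have hopen : IsOpen {z : ℂ | 0 < z.im} := isOpen_lt continuous_const Complex.continuous_im
  have hpi := Real.pi_pos
  set F : ℝ → ℂ := fun t => g (z + t*I) - (z + t*I) with hF
  set F' : ℝ → ℂ := fun t => (deriv g (z + t*I) - 1) * I with hF'
  have him : ∀ t : ℝ, (z + (t:ℂ)*I).im = z.im + t := by intro t; simp
  have hdF : ∀ t ∈ uIcc T₁ T₂, HasDerivAt F (F' t) t := by
    intro t ht
    rw [uIcc_of_le h12] at ht
    have htpos : 0 < (z + (t:ℂ)*I).im := by rw [him]; linarith [ht.1]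
    have h1 : HasDerivAt g (deriv g (z + (t:ℂ)*I)) (z + (t:ℂ)*I) :=
      (hd.differentiableAt (hopen.mem_nhds htpos)).hasDerivAt
    have h2 : HasDerivAt (fun w : ℂ => g w - w) (deriv g (z + (t:ℂ)*I) - 1) (z + (t:ℂ)*I) :=
      h1.sub (hasDerivAt_id _)
    have hu : HasDerivAt (fun w : ℂ => z + w*I) I (t:ℂ) := by
      simpa using ((hasDerivAt_id (t:ℂ)).mul_const I).const_add z
    have h3 := HasDerivAt.comp (t:ℂ) h2 hu
    have h4 := h3.comp_ofReal
    simpa [Function.comp_def] using h4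
  have hcont : ContinuousOn F' (uIcc T₁ T₂) := by
    apply ContinuousOn.mul _ continuousOn_const
    apply ContinuousOn.sub _ continuousOn_const
    have han := ((hd.analyticOnNhd hopen).deriv).continuousOn
    apply han.comp
    · exact (continuous_const.add (Complex.continuous_ofReal.mul continuous_const)).continuousOn
    · intro t ht
      rw [uIcc_of_le h12] at ht
      simp only [mem_setOf_eq]
      rw [him]
      linarith [ht.1]
  have hFTC := intervalIntegral.integral_eq_sub_of_hasDerivAt hdF (hcont.intervalIntegrable)
  have hnorm : ‖F T₂ - F T₁‖ ≤ ∫ t in T₁..T₂, ‖F' t‖ := by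
    rw [← hFTC]
    exact intervalIntegral.norm_integral_le_integral_norm h12
  -- compare with exponential bound
  set B : ℝ → ℝ := fun t => K * Real.exp (-(2*Real.pi*(z.im + t))) with hB
  have hBcont : Continuous B := by
    apply continuous_const.mul
    apply Real.continuous_exp.comp
    continuity
  have hmono : ∫ t in T₁..T₂, ‖F' t‖ ≤ ∫ t in T₁..T₂, B t := by
    apply intervalIntegral.integral_mono_on h12
      (hcont.norm.intervalIntegrable) (hBcont.intervalIntegrable _ _)
    intro t ht
    have him2 : (1:ℝ)/2 < (z + (t:ℂ)*I).im := by rw [him]; linarith [ht.1]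
    have := hK _ him2
    rw [him] at this
    calc ‖F' t‖ = ‖deriv g (z + (t:ℂ)*I) - 1‖ := by
          rw [hF']; simp [norm_mul]
      _ ≤ B t := this
  -- evaluate ∫ B
  have hGder : ∀ t ∈ uIcc T₁ T₂, HasDerivAt
      (fun t : ℝ => -(K/(2*Real.pi)) * Real.exp (-(2*Real.pi*(z.im + t)))) (B t) t := by
    intro t _
    have h1 : HasDerivAt (fun t : ℝ => -(2*Real.pi*(z.im + t))) (-(2*Real.pi)) t := by
      simpa [Pi.neg_def] using (((hasDerivAt_id t).const_add z.im).const_mul (2*Real.pi)).neg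
    have h2 := h1.exp
    have h3 := h2.const_mul (-(K/(2*Real.pi)))
    apply h3.congr_deriv
    rw [hB]
    field_simp
  have hBint := intervalIntegral.integral_eq_sub_of_hasDerivAt hGder
    ((hBcont.continuousOn).intervalIntegrable)
  have hBval : ∫ t in T₁..T₂, B t ≤ K/(2*Real.pi) * Real.exp (-(2*Real.pi*(z.im + T₁))) := by
    rw [hBint]
    have he2 : 0 < Real.exp (-(2*Real.pi*(z.im + T₂))) := Real.exp_pos _
    have hKnonneg : 0 ≤ K := by
      have := hK (z) hz
      have hexp : 0 < Real.exp (-(2*Real.pi*z.im)) := Real.exp_pos _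
      nlinarith [norm_nonneg (deriv g z - 1)]
    have hfrac : 0 ≤ K/(2*Real.pi) := by positivity
    nlinarith [mul_nonneg hfrac he2.le]
  calc ‖F T₂ - F T₁‖ ≤ ∫ t in T₁..T₂, ‖F' t‖ := hnorm
    _ ≤ ∫ t in T₁..T₂, B t := hmono
    _ ≤ K/(2*Real.pi) * Real.exp (-(2*Real.pi*(z.im + T₁))) := hBval


/-- There is a universal constant `C > 0` such that for every injective holomorphic
`g : ℍ → ℂ` with `g(z+1) = g(z)+1` there is `α ∈ ℂ` with
`|g z - z + α| ≤ C exp(-2π Im z)` whenever `Im z ≥ C`. -/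
theorem stmt3 :
    ∃ C : ℝ, 0 < C ∧
      ∀ g : ℂ → ℂ,
        DifferentiableOn ℂ g {z : ℂ | 0 < z.im} →
        Set.InjOn g {z : ℂ | 0 < z.im} →
        (∀ z : ℂ, 0 < z.im → g (z + 1) = g z + 1) →
        ∃ α : ℂ, ∀ z : ℂ, 0 < z.im → C ≤ z.im →
          ‖g z - z + α‖ ≤ C * Real.exp (-(2 * Real.pi * z.im)) := by
  refine ⟨10000, by norm_num, ?_⟩
  intro g hd hinj hper
  have hopen : IsOpen {z : ℂ | 0 < z.im} := isOpen_lt continuous_const Complex.continuous_im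
  have hpi := Real.pi_pos
  set K : ℝ := 642 * Real.exp Real.pi with hKdef
  have hKpos : 0 < K := by positivity
  have hK := derivDecay hd hinj hper
  have hKnum : K / (2*Real.pi) ≤ 10000 := by
    have h1 : Real.exp Real.pi ≤ Real.exp 4 := Real.exp_le_exp.mpr (by
      linarith [Real.pi_le_four])
    have h2 : Real.exp 4 ≤ 55 := by
      have h3 : Real.exp 4 = (Real.exp 1)^4 := by
        rw [← Real.exp_nat_mul]; norm_num
      have h4 : (Real.exp 1)^4 ≤ (2.7182818286:ℝ)^4 := by
        apply pow_le_pow_left₀ (Real.exp_pos 1).le Real.exp_one_lt_d9.le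
      rw [h3]
      calc (Real.exp 1)^4 ≤ (2.7182818286:ℝ)^4 := h4
        _ ≤ 55 := by norm_num
    have h5 : (6:ℝ) ≤ 2*Real.pi := by linarith [Real.pi_gt_three]
    rw [div_le_iff₀ (by linarith : (0:ℝ) < 2*Real.pi)]
    nlinarith
  set h : ℂ → ℂ := fun z => g z - z with hh
  -- integer periodicity
  have hnat : ∀ (n : ℕ) (z : ℂ), 0 < z.im → g (z + n) = g z + n := by
    intro n
    induction n with
    | zero => intro z hz; simp
    | succ k ih =>
        intro z hz
        have him : 0 < (z + (k:ℂ)).im := by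
          simp only [add_im, natCast_im, add_zero]; exact hz
        push_cast
        calc g (z + ((k:ℂ)+1)) = g ((z + k) + 1) := by congr 1; ring
          _ = g (z + k) + 1 := hper _ him
          _ = g z + k + 1 := by rw [ih z hz]
          _ = g z + ((k:ℂ)+1) := by ring
  have hnatneg : ∀ (n : ℕ) (z : ℂ), 0 < z.im → g (z - n) = g z - n := by
    intro n
    induction n with
    | zero => intro z hz; simp
    | succ k ih =>
        intro z hz
        have him : 0 < (z - (k:ℂ) - 1).im := by
          simp only [sub_im, natCast_im, one_im, sub_zero]; exact hz
        have h1 : g ((z - k - 1) + 1) = g (z - k - 1) + 1 := hper _ him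
        have h2 : (z - (k:ℂ) - 1) + 1 = z - k := by ring
        rw [h2, ih z hz] at h1
        push_cast
        have : g (z - ((k:ℂ)+1)) = g (z - k - 1) := by congr 1; ring
        rw [this]
        have h3 : g (z - (k:ℂ) - 1) = g z - k - 1 := by linear_combination -h1
        rw [h3]; ring
  have hhper : ∀ (m : ℤ) (z : ℂ), 0 < z.im → h (z + m) = h z := by
    intro m z hz
    obtain ⟨n, rfl | rfl⟩ := m.eq_nat_or_neg
    · simp only [hh]
      push_cast
      rw [hnat n z hz]; ring
    · simp only [hh]
      push_cast
      rw [show z + -(n:ℂ) = z - n by ring, hnatneg n z hz]; ring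
  -- the limit L
  set u : ℕ → ℂ := fun n => g (I + (n:ℝ)*I) - (I + (n:ℝ)*I) with hu
  have hIim : (1:ℝ)/2 < (I : ℂ).im := by simp; norm_num
  have hIim1 : (I:ℂ).im = 1 := by simp
  have hcauchy : CauchySeq u := by
    apply cauchySeq_of_dist_le_of_summable
      (d := fun n => K/(2*Real.pi) * Real.exp (-(2*Real.pi*(1 + n))))
    · intro n
      have hvest := vest hd hK hIim (by positivity : (0:ℝ) ≤ (n:ℝ))
        (by linarith : (n:ℝ) ≤ (n:ℝ)+1)
      rw [hIim1] at hvest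
      rw [dist_eq_norm']
      have hc : ((n+1:ℕ):ℝ) = (n:ℝ)+1 := by push_cast; ring
      simp only [hu, hc]
      exact hvest
    · have heq : (fun n : ℕ => K/(2*Real.pi) * Real.exp (-(2*Real.pi*(1 + n))))
          = fun n : ℕ => (K/(2*Real.pi) * Real.exp (-(2*Real.pi))) * (Real.exp (-(2*Real.pi)))^n := by
        funext n
        rw [show -(2*Real.pi*(1+(n:ℝ))) = -(2*Real.pi) + (n:ℝ)*(-(2*Real.pi)) by ring,
          Real.exp_add, Real.exp_nat_mul]
        ring
      rw [heq]
      apply Summable.mul_left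
      apply summable_geometric_of_lt_one (Real.exp_pos _).le
      rw [Real.exp_lt_one_iff]
      linarith
  obtain ⟨L, hL⟩ := cauchySeq_tendsto_of_complete hcauchy
  refine ⟨-L, ?_⟩
  intro z hz0 hzC
  set y := z.im with hy
  have hy2 : (1:ℝ)/2 < y := by rw [hy]; linarith
  set m : ℤ := ⌊z.re⌋ with hm
  set z' : ℂ := z - m with hz'
  have hz'im : z'.im = y := by simp [hz', hy]
  have hz're0 : 0 ≤ z'.re := by
    simp only [hz', sub_re, intCast_re]
    have := Int.floor_le z.re
    simp only [hm]
    linarith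
  have hz're1 : z'.re < 1 := by
    simp only [hz', sub_re, intCast_re, hm]
    have := Int.lt_floor_add_one z.re
    linarith
  have hz'im0 : 0 < z'.im := by rw [hz'im]; linarith
  have hhz : h z = h z' := by
    have h1 := hhper m z' hz'im0
    have hzz : z' + m = z := by simp [hz']
    rw [hzz] at h1
    exact h1
  -- main estimate for ‖h z' - L‖
  have hmain : ‖h z' - L‖ ≤ K/(2*Real.pi) * Real.exp (-(2*Real.pi*y)) := by
    have hb : Tendsto (fun n : ℕ => K * Real.exp (-(2*Real.pi*(1 + n))) + dist (u n) L)
        atTop (𝓝 0) := by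
      have hb1 : Tendsto (fun n : ℕ => K * Real.exp (-(2*Real.pi*(1 + n)))) atTop (𝓝 0) := by
        have heq : (fun n : ℕ => K * Real.exp (-(2*Real.pi*(1 + n))))
            = fun n : ℕ => (K * Real.exp (-(2*Real.pi))) * (Real.exp (-(2*Real.pi)))^n := by
          funext n
          rw [show -(2*Real.pi*(1+(n:ℝ))) = -(2*Real.pi) + (n:ℝ)*(-(2*Real.pi)) by ring,
            Real.exp_add, Real.exp_nat_mul]
          ring
        rw [heq]
        rw [show (0:ℝ) = (K * Real.exp (-(2*Real.pi))) * 0 by ring]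
        apply Tendsto.const_mul
        apply tendsto_pow_atTop_nhds_zero_of_lt_one (Real.exp_pos _).le
        rw [Real.exp_lt_one_iff]; linarith
      have hb2 : Tendsto (fun n : ℕ => dist (u n) L) atTop (𝓝 0) := by
        rw [tendsto_iff_dist_tendsto_zero] at hL
        exact hL
      simpa using hb1.add hb2
    have hev : ∀ᶠ n : ℕ in atTop,
        ‖h z' - L‖ - K/(2*Real.pi) * Real.exp (-(2*Real.pi*y)) ≤
        K * Real.exp (-(2*Real.pi*(1 + n))) + dist (u n) L := by
      filter_upwards [eventually_ge_atTop (Nat.ceil y)] with n hn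
      have hny : y ≤ (n:ℝ) := le_trans (Nat.le_ceil y) (by exact_mod_cast hn)
      set T : ℝ := 1 + n - y with hT
      have hT0 : 0 ≤ T := by rw [hT]; linarith
      set a : ℂ := z' + (T:ℝ)*I with ha
      set p : ℂ := I + (n:ℝ)*I with hp
      -- Term 1 : vertical
      have ht1 : ‖h a - h z'‖ ≤ K/(2*Real.pi) * Real.exp (-(2*Real.pi*y)) := by
        have hvest := vest hd hK (show (1:ℝ)/2 < z'.im by rw [hz'im]; exact hy2)
          (le_refl (0:ℝ)) hT0
        rw [hz'im] at hvest
        have hz0I : z' + ((0:ℝ):ℂ)*I = z' := by push_cast; ring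
        rw [hz0I] at hvest
        have : y + 0 = y := by ring
        rw [this] at hvest
        exact hvest
      -- Term 2 : horizontal
      have haim : a.im = 1 + n := by
        simp only [ha, add_im, mul_im, ofReal_re, ofReal_im, I_im, I_re, mul_zero, mul_one,
          zero_mul, add_zero, zero_add]
        rw [hz'im, hT]; ring
      have hpim : p.im = 1 + n := by
        simp only [hp, add_im, I_im, mul_im, ofReal_re, ofReal_im, I_im, I_re, mul_one, mul_zero,
          zero_mul, add_zero, zero_add]
      have hfact : a - p = (z'.re : ℂ) := by
        apply Complex.ext
        · simp [ha, hp]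
        · rw [sub_im, haim, hpim]
          simp
      have ht2 : ‖h a - h p‖ ≤ K * Real.exp (-(2*Real.pi*(1+n))) * 1 := by
        have hseg : ∀ w ∈ segment ℝ p a, w.im = 1 + n := by
          intro w hw
          obtain ⟨s, t, hs, ht, hst, hw⟩ := hw
          rw [← hw]
          have hsm : (s • p + t • a).im = s * p.im + t * a.im := by
            simp [Complex.add_im, Complex.smul_im]
          rw [hsm, hpim, haim]
          linear_combination (1+(n:ℝ)) * hst
        have hnn : (0:ℝ) ≤ (n:ℝ) := n.cast_nonneg
        have hdiffh : ∀ w ∈ segment ℝ p a, DifferentiableAt ℂ h w := by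
          intro w hw
          have him : 0 < w.im := by rw [hseg w hw]; linarith
          exact ((hd.differentiableAt (hopen.mem_nhds him)).sub differentiableAt_id)
        have hboundh : ∀ w ∈ segment ℝ p a,
            ‖deriv h w‖ ≤ K * Real.exp (-(2*Real.pi*(1+n))) := by
          intro w hw
          have him : w.im = 1+n := hseg w hw
          have him2 : 1/2 < w.im := by rw [him]; linarith
          have him0 : 0 < w.im := by linarith
          have hder : deriv h w = deriv g w - 1 := by
            have h1 : HasDerivAt g (deriv g w) w :=
              (hd.differentiableAt (hopen.mem_nhds him0)).hasDerivAt
            have h2 : HasDerivAt h (deriv g w - 1) w := by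
              simp only [hh]; exact h1.sub (hasDerivAt_id w)
            exact h2.deriv
          rw [hder]
          have hKw := hK w him2
          rw [him] at hKw
          exact hKw
        have hmvt := Convex.norm_image_sub_le_of_norm_deriv_le hdiffh hboundh
          (convex_segment p a) (left_mem_segment ℝ p a) (right_mem_segment ℝ p a)
        calc ‖h a - h p‖ ≤ K * Real.exp (-(2*Real.pi*(1+n))) * ‖a - p‖ := hmvt
          _ ≤ K * Real.exp (-(2*Real.pi*(1+n))) * 1 := by
              apply mul_le_mul_of_nonneg_left _ (by positivity)
              rw [hfact]
              have : ‖((z'.re:ℝ) : ℂ)‖ = |z'.re| := by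
                rw [Complex.norm_real, Real.norm_eq_abs]
              rw [this, _root_.abs_of_nonneg hz're0]
              linarith
      -- Term 3
      have ht3 : h p = u n := by simp [hh, hu, hp]
      have htri : ‖h z' - L‖ ≤ ‖h a - h z'‖ + ‖h a - h p‖ + dist (u n) L := by
        rw [dist_eq_norm, ← ht3]
        calc ‖h z' - L‖ = ‖-(h a - h z') + (h a - h p) + (h p - L)‖ := by congr 1; ring
          _ ≤ ‖-(h a - h z')‖ + ‖h a - h p‖ + ‖h p - L‖ := norm_add₃_le
          _ = ‖h a - h z'‖ + ‖h a - h p‖ + ‖h p - L‖ := by rw [norm_neg]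
      have := ht2
      rw [mul_one] at this
      linarith
    have := ge_of_tendsto hb hev
    linarith
  have hαeq : g z - z + -L = h z - L := by simp only [hh]; ring
  rw [hαeq, hhz]
  calc ‖h z' - L‖ ≤ K/(2*Real.pi) * Real.exp (-(2*Real.pi*y)) := hmain
    _ ≤ 10000 * Real.exp (-(2 * Real.pi * z.im)) := by
        rw [hy]
        exact mul_le_mul_of_nonneg_right hKnum (Real.exp_pos _).le

end
end

section
/- There exists a universal constant C > 0 such that: for every injective holomorphic map g : ℍ → ℂ satisfying g(z+1) = g(z)+1, and every z ∈ ℍ with Im z ≥ C, one has 1/C ≤ |g'(z)| ≤ C. -/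
open MeasureTheory Metric Set Complex Filter intervalIntegral
open scoped Real Topology ENNReal


/-- determinant of (real) multiplication by a complex number -/
lemma det_mul_complex (c : ℂ) :
    (((ContinuousLinearMap.smulRight (1 : ℂ →L[ℂ] ℂ) c).restrictScalars ℝ) :
      ℂ →L[ℝ] ℂ).det = Complex.normSq c := by
  have h : (((ContinuousLinearMap.smulRight (1 : ℂ →L[ℂ] ℂ) c).restrictScalars ℝ) :
      ℂ →ₗ[ℝ] ℂ) = Algebra.lmul ℝ ℂ c := by
    apply LinearMap.ext
    intro x
    simp [mul_comm]
  change LinearMap.det _ = _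
  rw [h, ← Algebra.norm_apply, Algebra.norm_complex_apply]

/-- circle mean value inequality for holomorphic functions -/
lemma circle_mean_norm_le {f : ℂ → ℂ} {c : ℂ} {s : ℝ} (hs : 0 < s)
    (hc : ContinuousOn f (closedBall c s)) (hdiff : ∀ x ∈ ball c s, DifferentiableAt ℂ f x) :
    2 * π * ‖f c‖ ≤ ∫ θ in (0:ℝ)..(2*π), ‖f (circleMap c s θ)‖ := by
  have key := Complex.circleIntegral_sub_center_inv_smul_of_differentiable_on_off_countable
    hs Set.countable_empty hc (fun z hz => hdiff z hz.1)
  have h1 : (∮ z in C(c, s), (z - c)⁻¹ • f z)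
      = ∫ θ in (0:ℝ)..(2*π), I • f (circleMap c s θ) := by
    rw [circleIntegral]
    apply intervalIntegral.integral_congr
    intro θ _
    have hne : circleMap 0 s θ ≠ 0 := by
      simpa [circleMap_eq_center_iff] using hs.ne'
    simp only [deriv_circleMap, circleMap_sub_center, smul_smul]
    field_simp
  rw [h1, intervalIntegral.integral_smul] at key
  have h2 : ∫ θ in (0:ℝ)..(2*π), f (circleMap c s θ) = (2 * (π:ℂ)) * f c := by
    have hI : (I:ℂ) ≠ 0 := I_ne_zero
    have := key
    rw [smul_eq_mul, smul_eq_mul] at this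
    have h3 : I * (∫ θ in (0:ℝ)..(2*π), f (circleMap c s θ)) = I * (2 * (π:ℂ) * f c) := by
      rw [this]; ring
    exact mul_left_cancel₀ hI h3
  have h4 : ‖∫ θ in (0:ℝ)..(2*π), f (circleMap c s θ)‖ = 2 * π * ‖f c‖ := by
    rw [h2]
    simp [norm_mul, Real.pi_nonneg, _root_.abs_of_nonneg]
  calc 2 * π * ‖f c‖ = ‖∫ θ in (0:ℝ)..(2*π), f (circleMap c s θ)‖ := h4.symm
    _ ≤ ∫ θ in (0:ℝ)..(2*π), ‖f (circleMap c s θ)‖ :=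
        intervalIntegral.norm_integral_le_integral_norm (by positivity)

/-- polar coordinates lower bound for lintegral over the plane -/
lemma lintegral_polar_le (F : ℂ → ℝ≥0∞) :
    ∫⁻ p in (Ioi (0:ℝ) ×ˢ Ioo (-π) π), ENNReal.ofReal p.1 * F (Complex.polarCoord.symm p)
      ≤ ∫⁻ z, F z := by
  set B : ℝ × ℝ → ℝ × ℝ →L[ℝ] ℝ × ℝ := fun p =>
    LinearMap.toContinuousLinearMap (Matrix.toLin (Module.Basis.finTwoProd ℝ) (Module.Basis.finTwoProd ℝ)
      !![Real.cos p.2, -p.1 * Real.sin p.2; Real.sin p.2, p.1 * Real.cos p.2]) with hB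
  have A : ∀ p ∈ polarCoord.target, HasFDerivWithinAt polarCoord.symm (B p) polarCoord.target p :=
    fun p _ => (hasFDerivAt_polarCoord_symm p).hasFDerivWithinAt
  have B_det : ∀ p, (B p).det = p.1 := by
    intro p
    conv_rhs => rw [← one_mul p.1, ← Real.cos_sq_add_sin_sq p.2]
    simp only [hB, neg_mul, LinearMap.det_toContinuousLinearMap, LinearMap.det_toLin,
      Matrix.det_fin_two_of, sub_neg_eq_add]
    ring
  set G : ℝ × ℝ → ℝ≥0∞ := fun q => F (Complex.measurableEquivRealProd.symm q) with hG
  have htarget : (Ioi (0:ℝ) ×ˢ Ioo (-π) π) = polarCoord.target := by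
    simp [polarCoord]
  have hinj : InjOn polarCoord.symm polarCoord.target := by
    have := polarCoord.symm.injOn
    simpa using this
  have key := lintegral_image_eq_lintegral_abs_det_fderiv_mul volume
    (by rw [htarget] at *; exact polarCoord.open_target.measurableSet) A hinj G
  have h1 : ∫⁻ p in polarCoord.target, ENNReal.ofReal |(B p).det| * G (polarCoord.symm p)
      = ∫⁻ p in polarCoord.target, ENNReal.ofReal p.1 * F (Complex.polarCoord.symm p) := by
    apply setLIntegral_congr_fun polarCoord.open_target.measurableSet
    intro p hp
    dsimp only
    rw [B_det, abs_of_pos hp.1]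
    rfl
  have h2 : ∫⁻ x in polarCoord.symm '' polarCoord.target, G x ≤ ∫⁻ x, G x :=
    setLIntegral_le_lintegral _ _
  have h3 : ∫⁻ x : ℝ × ℝ, G x = ∫⁻ z : ℂ, F z := by
    have hmp : MeasurePreserving (Complex.measurableEquivRealProd.symm) volume volume :=
      Complex.volume_preserving_equiv_real_prod.symm
    exact hmp.lintegral_comp_emb Complex.measurableEquivRealProd.symm.measurableEmbedding F
  rw [htarget, ← h1, ← key]
  rw [h3] at h2
  exact h2

lemma add_polarCoord_symm (c : ℂ) (r θ : ℝ) :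
    c + Complex.polarCoord.symm (r, θ) = circleMap c r θ := by
  rw [Complex.polarCoord_symm_apply, circleMap]
  push_cast
  rw [Complex.exp_mul_I]

/-- areal mean value inequality -/
lemma ball_mean {f : ℂ → ℂ} (hfm : Measurable f) {U : Set ℂ} (hU : IsOpen U)
    (hf : DifferentiableOn ℂ f U) {c : ℂ} {R : ℝ} (hR : 0 < R)
    (hsub : closedBall c R ⊆ U) :
    ENNReal.ofReal (π * R ^ 2 * ‖f c‖) ≤ ∫⁻ z in ball c R, ENNReal.ofReal ‖f z‖ := by
  -- translation to center 0
  have htrans : ∫⁻ z in ball (0:ℂ) R, ENNReal.ofReal ‖f (c + z)‖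
      = ∫⁻ z in ball c R, ENNReal.ofReal ‖f z‖ := by
    have hpre : (fun x : ℂ => c + x) ⁻¹' (ball c R) = ball (0:ℂ) R := by
      ext x; simp [mem_ball, dist_eq_norm]
    have := (measurePreserving_add_left volume c).setLIntegral_comp_preimage_emb
      (Homeomorph.addLeft c).measurableEmbedding (fun z => ENNReal.ofReal ‖f z‖) (ball c R)
    rw [hpre] at this
    exact this
  set F : ℂ → ℝ≥0∞ := (ball (0:ℂ) R).indicator (fun z => ENNReal.ofReal ‖f (c + z)‖) with hF
  have hFmeas : Measurable F := by
    apply Measurable.indicator _ measurableSet_ball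
    exact ((hfm.comp (measurable_const_add c)).norm).ennreal_ofReal
  have hind : ∫⁻ z, F z = ∫⁻ z in ball (0:ℂ) R, ENNReal.ofReal ‖f (c + z)‖ :=
    lintegral_indicator measurableSet_ball _
  -- continuity of f on circles
  have hcont : ∀ r : ℝ, 0 < r → r ≤ R → Continuous (fun θ => ‖f (circleMap c r θ)‖) := by
    intro r hr hrR
    apply Continuous.norm
    apply hf.continuousOn.comp_continuous (continuous_circleMap c r)
    intro θ
    apply hsub
    have : circleMap c r θ ∈ sphere c r := circleMap_mem_sphere c hr.le θ
    exact closedBall_subset_closedBall hrR (sphere_subset_closedBall this)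
  -- inner circle estimate
  have hinner : ∀ r ∈ Ioo (0:ℝ) R,
      ENNReal.ofReal (2 * π * ‖f c‖) ≤ ∫⁻ θ in Ioo (-π) π, ENNReal.ofReal ‖f (circleMap c r θ)‖ := by
    intro r hr
    have hu := hcont r hr.1 hr.2.le
    have hint : IntegrableOn (fun θ => ‖f (circleMap c r θ)‖) (Ioo (-π) π) := by
      exact (hu.integrableOn_Icc (a := -π) (b := π)).mono_set Ioo_subset_Icc_self
    have h1 : ENNReal.ofReal (∫ θ in Ioo (-π) π, ‖f (circleMap c r θ)‖)
        = ∫⁻ θ in Ioo (-π) π, ENNReal.ofReal ‖f (circleMap c r θ)‖ :=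
      ofReal_integral_eq_lintegral_ofReal hint (ae_of_all _ fun θ => norm_nonneg _)
    have hper : Function.Periodic (fun θ => ‖f (circleMap c r θ)‖) (2*π) :=
      (periodic_circleMap c r).comp (fun z => ‖f z‖)
    have h2 : ∫ θ in Ioo (-π) π, ‖f (circleMap c r θ)‖
        = ∫ θ in (0:ℝ)..(2*π), ‖f (circleMap c r θ)‖ := by
      rw [← MeasureTheory.integral_Ioc_eq_integral_Ioo,
        ← intervalIntegral.integral_of_le (by linarith [Real.pi_pos] : (-π:ℝ) ≤ π)]
      have := hper.intervalIntegral_add_eq (-π) 0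
      norm_num at this ⊢
      convert this using 2 <;> ring
    have h3 := circle_mean_norm_le hr.1
      (hf.continuousOn.mono (subset_trans (closedBall_subset_closedBall hr.2.le) hsub))
      (fun x hx => hf.differentiableAt (hU.mem_nhds (hsub (ball_subset_closedBall
        (ball_subset_ball hr.2.le hx)))))
    rw [← h1]
    apply ENNReal.ofReal_le_ofReal
    rw [h2]
    exact h3
  -- measurability of polar integrand
  have hFG : (fun p : ℝ × ℝ => ENNReal.ofReal p.1 * F (Complex.polarCoord.symm p))
      = fun p : ℝ × ℝ =>
        ENNReal.ofReal p.1 * F (↑p.1 * (↑(Real.cos p.2) + ↑(Real.sin p.2) * I)) := by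
    funext p; rw [Complex.polarCoord_symm_apply]
  have hmeas2 : Measurable (fun p : ℝ × ℝ => ENNReal.ofReal p.1 * F (Complex.polarCoord.symm p)) := by
    rw [hFG]
    apply Measurable.mul
    · exact measurable_fst.ennreal_ofReal
    · apply hFmeas.comp
      apply Continuous.measurable
      fun_prop
  -- restrict polar bound to Ioo 0 R
  have hrestr : ∫⁻ p in (Ioo (0:ℝ) R ×ˢ Ioo (-π) π),
        ENNReal.ofReal p.1 * F (Complex.polarCoord.symm p) ≤ ∫⁻ z, F z :=
    le_trans (lintegral_mono_set (prod_mono_left Ioo_subset_Ioi_self)) (lintegral_polar_le F)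
  -- Fubini
  have hiter : ∫⁻ p in (Ioo (0:ℝ) R ×ˢ Ioo (-π) π),
        ENNReal.ofReal p.1 * F (Complex.polarCoord.symm p)
      = ∫⁻ r in Ioo (0:ℝ) R, ∫⁻ θ in Ioo (-π) π,
          ENNReal.ofReal r * F (Complex.polarCoord.symm (r, θ)) := by
    rw [show (volume : Measure (ℝ × ℝ)).restrict (Ioo (0:ℝ) R ×ˢ Ioo (-π) π)
        = (volume.restrict (Ioo (0:ℝ) R)).prod (volume.restrict (Ioo (-π) π)) by
      rw [Measure.prod_restrict, ← Measure.volume_eq_prod]]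
    exact lintegral_prod _ hmeas2.aemeasurable
  -- pointwise lower bound for the inner integral
  have hpoint : ∀ r ∈ Ioo (0:ℝ) R,
      ENNReal.ofReal (2 * π * ‖f c‖) * ENNReal.ofReal r
        ≤ ∫⁻ θ in Ioo (-π) π, ENNReal.ofReal r * F (Complex.polarCoord.symm (r, θ)) := by
    intro r hr
    have hmem : ∀ θ : ℝ, Complex.polarCoord.symm (r, θ) ∈ ball (0:ℂ) R := by
      intro θ
      rw [mem_ball_zero_iff, Complex.norm_polarCoord_symm]
      simpa [_root_.abs_of_pos hr.1] using hr.2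
    have heq : ∀ θ : ℝ, F (Complex.polarCoord.symm (r, θ))
        = ENNReal.ofReal ‖f (circleMap c r θ)‖ := by
      intro θ
      rw [hF, indicator_of_mem (hmem θ), ← add_polarCoord_symm c r θ]
    have hm : Measurable fun θ : ℝ => ENNReal.ofReal ‖f (circleMap c r θ)‖ := by
      exact ((hfm.comp (measurable_circleMap c r)).norm).ennreal_ofReal
    have h5 : ∫⁻ θ in Ioo (-π) π, ENNReal.ofReal r * F (Complex.polarCoord.symm (r, θ))
        = ENNReal.ofReal r * ∫⁻ θ in Ioo (-π) π, ENNReal.ofReal ‖f (circleMap c r θ)‖ := by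
      rw [← lintegral_const_mul _ hm]
      apply lintegral_congr
      intro θ
      rw [heq θ]
    rw [h5, mul_comm]
    gcongr
    exact hinner r hr
  -- outer integral computation
  have houter : ∫⁻ r in Ioo (0:ℝ) R, ENNReal.ofReal (2 * π * ‖f c‖) * ENNReal.ofReal r
      = ENNReal.ofReal (π * R ^ 2 * ‖f c‖) := by
    rw [lintegral_const_mul _ measurable_id'.ennreal_ofReal]
    have hid : ∫⁻ r in Ioo (0:ℝ) R, ENNReal.ofReal r = ENNReal.ofReal (R ^ 2 / 2) := by
      rw [← ofReal_integral_eq_lintegral_ofReal]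
      · congr 1
        rw [← MeasureTheory.integral_Ioc_eq_integral_Ioo,
          ← intervalIntegral.integral_of_le hR.le, integral_id]
        ring
      · exact (continuous_id.integrableOn_Icc).mono_set Ioo_subset_Icc_self
      · exact (ae_restrict_mem measurableSet_Ioo).mono fun x hx => hx.1.le
    rw [hid, ← ENNReal.ofReal_mul (by positivity)]
    congr 1
    ring
  -- combine
  have hmono : ∫⁻ r in Ioo (0:ℝ) R, ENNReal.ofReal (2 * π * ‖f c‖) * ENNReal.ofReal r
      ≤ ∫⁻ r in Ioo (0:ℝ) R, ∫⁻ θ in Ioo (-π) π,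
          ENNReal.ofReal r * F (Complex.polarCoord.symm (r, θ)) := by
    apply setLIntegral_mono
    · apply Measurable.lintegral_prod_right (f := fun r θ =>
        ENNReal.ofReal r * F (Complex.polarCoord.symm (r, θ)))
      exact hmeas2
    · exact hpoint
  rw [← htrans, ← hind]
  calc ENNReal.ofReal (π * R ^ 2 * ‖f c‖)
      = ∫⁻ r in Ioo (0:ℝ) R, ENNReal.ofReal (2 * π * ‖f c‖) * ENNReal.ofReal r := houter.symm
    _ ≤ ∫⁻ r in Ioo (0:ℝ) R, ∫⁻ θ in Ioo (-π) π,
          ENNReal.ofReal r * F (Complex.polarCoord.symm (r, θ)) := hmono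
    _ = ∫⁻ p in (Ioo (0:ℝ) R ×ˢ Ioo (-π) π),
          ENNReal.ofReal p.1 * F (Complex.polarCoord.symm p) := hiter.symm
    _ ≤ ∫⁻ z, F z := hrestr

/-- a set of reals avoiding all its nonzero integer translates has measure at most 1 -/
lemma sec_vol_le_one {A : Set ℝ} (hA : MeasurableSet A)
    (h : ∀ k : ℤ, k ≠ 0 → ∀ x ∈ A, x + (k:ℝ) ∉ A) : volume A ≤ 1 := by
  have hcover : A = ⋃ k : ℤ, A ∩ Ico (k:ℝ) (k+1) := by
    rw [← inter_iUnion, iUnion_Ico_intCast ℝ, inter_univ]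
  set B : ℤ → Set ℝ := fun k => (fun x : ℝ => (k:ℝ) + x) ⁻¹' (A ∩ Ico (k:ℝ) (k+1)) with hB
  have hBm : ∀ k, MeasurableSet (B k) := fun k =>
    ((hA.inter measurableSet_Ico).preimage (measurable_const_add _))
  have hBsub : ∀ k, B k ⊆ Ico (0:ℝ) 1 := by
    intro k x hx
    have := hx.2
    simp only [mem_Ico] at this ⊢
    constructor <;> linarith [this.1, this.2]
  have hBdisj : Pairwise (Function.onFun Disjoint B) := by
    intro k j hkj
    rw [Function.onFun, disjoint_left]
    rintro x ⟨hxA1, _⟩ ⟨hxA2, _⟩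
    have hne : j - k ≠ 0 := sub_ne_zero.2 (Ne.symm hkj)
    apply h (j - k) hne ((k:ℝ) + x) hxA1
    have : (k:ℝ) + x + ((j - k : ℤ):ℝ) = (j:ℝ) + x := by push_cast; ring
    rw [this]
    exact hxA2
  have hvolB : ∀ k : ℤ, volume (A ∩ Ico (k:ℝ) (k+1)) = volume (B k) := by
    intro k
    rw [hB]
    exact (measure_preimage_add volume ((k:ℝ)) _).symm
  calc volume A = volume (⋃ k : ℤ, A ∩ Ico (k:ℝ) (k+1)) := by rw [← hcover]
    _ = ∑' k : ℤ, volume (A ∩ Ico (k:ℝ) (k+1)) := by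
        apply measure_iUnion
        · intro k j hkj
          exact ((pairwise_disjoint_Ico_intCast ℝ) hkj).mono inter_subset_right
            inter_subset_right
        · exact fun k => hA.inter measurableSet_Ico
    _ = ∑' k : ℤ, volume (B k) := by simp_rw [hvolB]
    _ = volume (⋃ k, B k) := (measure_iUnion hBdisj hBm).symm
    _ ≤ volume (Ico (0:ℝ) 1) := measure_mono (iUnion_subset hBsub)
    _ = 1 := by simp [Real.volume_Ico]

/-- volume bound for the image of a small ball -/
lemma volume_image_ball_le {g : ℂ → ℂ}
    (hd : DifferentiableOn ℂ g {z : ℂ | 0 < z.im})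
    (hi : Set.InjOn g {z : ℂ | 0 < z.im})
    (hpk : ∀ k : ℤ, ∀ z : ℂ, 0 < z.im → g (z + (k:ℂ)) = g z + (k:ℂ))
    {z : ℂ} {r M : ℝ} (hr : 0 < r) (hr2 : r ≤ 1/2)
    (hsub : closedBall z r ⊆ {w : ℂ | 0 < w.im})
    (hM : ∀ x ∈ ball z r, ‖deriv g x‖ ≤ M) :
    volume (g '' ball z r) ≤ ENNReal.ofReal (2 * M * r) := by
  have hHo : IsOpen {w : ℂ | 0 < w.im} := by
    exact isOpen_lt continuous_const Complex.continuous_im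
  have hbH : ball z r ⊆ {w : ℂ | 0 < w.im} := subset_trans ball_subset_closedBall hsub
  have hM0 : 0 ≤ M := le_trans (norm_nonneg _) (hM z (mem_ball_self hr))
  -- the image is open
  have hSopen : IsOpen (g '' ball z r) := by
    rcases (hd.analyticOnNhd hHo).is_constant_or_isOpen
      ((convex_halfSpace_im_gt 0).isPreconnected) with hconst | hopen
    · exfalso
      obtain ⟨w, hw⟩ := hconst
      have h1 : g I = w := hw I (by simp)
      have h2 : g (I + (1:ℂ)) = w := hw _ (by simp)
      have := hpk 1 I (by simp)
      push_cast at this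
      rw [h1, h2] at this
      simp at this
    · exact hopen _ hbH isOpen_ball
  set S := g '' ball z r with hS
  -- extent bound
  have hext : ∀ p ∈ S, |p.im - (g z).im| ≤ M * r := by
    rintro p ⟨w, hw, rfl⟩
    have hz : z ∈ ball z r := mem_ball_self hr
    have hdiff : ∀ x ∈ ball z r, DifferentiableAt ℂ g x := fun x hx =>
      hd.differentiableAt (hHo.mem_nhds (hbH hx))
    have hbound := Convex.norm_image_sub_le_of_norm_deriv_le hdiff
      (fun x hx => hM x hx) (convex_ball z r) hz hw
    calc |(g w - g z).im| ≤ ‖g w - g z‖ := by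
          exact Complex.abs_im_le_norm _
      _ ≤ M * ‖w - z‖ := hbound
      _ ≤ M * r := by
          apply mul_le_mul_of_nonneg_left _ hM0
          rw [← dist_eq_norm]
          exact (mem_ball.1 hw).le
  -- image of translates
  have htrans : ∀ k : ℤ, k ≠ 0 → ∀ p ∈ S, p + (k:ℂ) ∉ S := by
    rintro k hk p ⟨w, hw, rfl⟩ ⟨w', hw', hww'⟩
    have hwH : 0 < w.im := hbH hw
    have hw'H : 0 < w'.im := hbH hw'
    have h1 : g w' = g (w + (k:ℂ)) := by rw [hpk k w hwH, hww']
    have hwkH : 0 < (w + (k:ℂ)).im := by simpa using hwH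
    have h2 : w' = w + (k:ℂ) := hi hw'H hwkH h1
    have hdisj : Disjoint (ball z r) (ball (z + (k:ℂ)) r) := by
      apply ball_disjoint_ball
      have h3 : dist z (z + (k:ℂ)) = ‖(k:ℂ)‖ := by
        rw [dist_eq_norm]; simp
      rw [h3]
      have h4 : (1:ℝ) ≤ ‖(k:ℂ)‖ := by
        have := Int.one_le_abs hk
        calc (1:ℝ) ≤ |(k:ℝ)| := by exact_mod_cast this
          _ = ‖(k:ℂ)‖ := by
            rw [show ((k:ℤ):ℂ) = (((k:ℤ):ℝ):ℂ) by push_cast; rfl, Complex.norm_real,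
              Real.norm_eq_abs]
      linarith
    have hmem1 : w' ∈ ball (z + (k:ℂ)) r := by
      rw [h2, mem_ball]
      simpa [dist_eq_norm] using mem_ball.1 hw
    exact (disjoint_left.1 hdisj hw') hmem1
  -- via sections
  set T := Complex.measurableEquivRealProd.symm ⁻¹' S with hT
  have hTm : MeasurableSet T :=
    hSopen.measurableSet.preimage Complex.measurableEquivRealProd.symm.measurable
  have hvolT : volume S = volume T := by
    rw [hT]
    exact ((Complex.volume_preserving_equiv_real_prod.symm _).measure_preimage
      hSopen.measurableSet.nullMeasurableSet).symm
  have hsec : volume T = ∫⁻ y : ℝ, volume {x : ℝ | (x, y) ∈ T} := by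
    have h := Measure.prod_apply_symm (μ := (volume : Measure ℝ)) (ν := (volume : Measure ℝ))
      (s := T) hTm
    rwa [← Measure.volume_eq_prod] at h
  set a := (g z).im - M * r with ha
  set b := (g z).im + M * r with hb
  have hsecle : ∀ y : ℝ, volume {x : ℝ | (x, y) ∈ T} ≤ (Icc a b).indicator 1 y := by
    intro y
    by_cases hy : y ∈ Icc a b
    · rw [indicator_of_mem hy]
      simp only [Pi.one_apply]
      apply sec_vol_le_one
      · have : {x : ℝ | (x, y) ∈ T} = (fun x : ℝ => Complex.measurableEquivRealProd.symm (x, y)) ⁻¹' S := rfl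
        rw [this]
        apply hSopen.measurableSet.preimage
        exact Complex.measurableEquivRealProd.symm.measurable.comp (by fun_prop)
      · intro k hk x hx hx2
        apply htrans k hk (Complex.measurableEquivRealProd.symm (x, y)) hx
        have : Complex.measurableEquivRealProd.symm (x + (k:ℝ), y)
            = Complex.measurableEquivRealProd.symm (x, y) + (k:ℂ) := by
          rw [Complex.measurableEquivRealProd_symm_apply, Complex.measurableEquivRealProd_symm_apply]
          apply Complex.ext <;> simp
        rw [← this]
        exact hx2
    · rw [indicator_of_notMem hy]
      rw [show (0:ℝ≥0∞) = volume (∅ : Set ℝ) by simp]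
      apply le_of_eq
      congr 1
      ext x
      simp only [mem_setOf_eq, mem_empty_iff_false, iff_false]
      intro hxT
      have hext2 := hext _ hxT
      rw [Complex.measurableEquivRealProd_symm_apply] at hext2
      simp only [Complex.ext_iff] at hext2
      apply hy
      rw [mem_Icc, ha, hb]
      have : |y - (g z).im| ≤ M * r := hext2
      rw [abs_le] at this
      constructor <;> linarith [this.1, this.2]
  calc volume S = ∫⁻ y : ℝ, volume {x : ℝ | (x, y) ∈ T} := by rw [hvolT, hsec]
    _ ≤ ∫⁻ y : ℝ, (Icc a b).indicator 1 y := lintegral_mono hsecle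
    _ = volume (Icc a b) := lintegral_indicator_one measurableSet_Icc
    _ = ENNReal.ofReal (2 * M * r) := by
        rw [Real.volume_Icc, ha, hb]
        congr 1
        ring

lemma isOpenH : IsOpen {z : ℂ | 0 < z.im} := isOpen_lt continuous_const Complex.continuous_im

/-- Jacobian change of variables for holomorphic g -/
lemma jacobian_eq {g : ℂ → ℂ} (hd : DifferentiableOn ℂ g {z : ℂ | 0 < z.im})
    (hi : Set.InjOn g {z : ℂ | 0 < z.im}) {z : ℂ} {r : ℝ}
    (hsub : ball z r ⊆ {w : ℂ | 0 < w.im}) :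
    ∫⁻ w in ball z r, ENNReal.ofReal (Complex.normSq (deriv g w)) = volume (g '' ball z r) := by
  have hf' : ∀ w ∈ ball z r, HasFDerivWithinAt g
      (((ContinuousLinearMap.smulRight (1 : ℂ →L[ℂ] ℂ) (deriv g w)).restrictScalars ℝ))
      (ball z r) w := by
    intro w hw
    have h1 : DifferentiableAt ℂ g w := hd.differentiableAt (isOpenH.mem_nhds (hsub hw))
    exact (h1.hasDerivAt.hasFDerivAt.restrictScalars ℝ).hasFDerivWithinAt
  have key := lintegral_abs_det_fderiv_eq_addHaar_image volume measurableSet_ball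
    hf' (hi.mono hsub)
  rw [← key]
  apply setLIntegral_congr_fun measurableSet_ball
  intro w hw
  dsimp only
  rw [det_mul_complex, _root_.abs_of_nonneg (Complex.normSq_nonneg _)]

/-- key pointwise-square inequality -/
lemma key_ineq {g : ℂ → ℂ}
    (hd : DifferentiableOn ℂ g {z : ℂ | 0 < z.im})
    (hi : Set.InjOn g {z : ℂ | 0 < z.im})
    (hpk : ∀ k : ℤ, ∀ z : ℂ, 0 < z.im → g (z + (k:ℂ)) = g z + (k:ℂ))
    {z : ℂ} {r : ℝ} (hr : 0 < r) (hr2 : r ≤ 1/2)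
    (hsub : closedBall z r ⊆ {w : ℂ | 0 < w.im}) :
    ‖deriv g z‖ ^ 2 * (π * r) ≤ 2 * sSup ((fun w => ‖deriv g w‖) '' closedBall z r) := by
  set M := sSup ((fun w => ‖deriv g w‖) '' closedBall z r) with hMdef
  have han : AnalyticOnNhd ℂ g {z : ℂ | 0 < z.im} := hd.analyticOnNhd isOpenH
  have hdc : ContinuousOn (deriv g) {z : ℂ | 0 < z.im} := han.deriv.continuousOn
  have hbdd : BddAbove ((fun w => ‖deriv g w‖) '' closedBall z r) :=
    (isCompact_closedBall z r).bddAbove_image ((hdc.mono hsub).norm)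
  have hM : ∀ x ∈ ball z r, ‖deriv g x‖ ≤ M := fun x hx =>
    le_csSup hbdd (mem_image_of_mem _ (ball_subset_closedBall hx))
  have hM0 : 0 ≤ M :=
    le_trans (norm_nonneg _) (le_csSup hbdd (mem_image_of_mem _ (mem_closedBall_self hr.le)))
  set φ : ℂ → ℂ := fun w => deriv g w * deriv g w with hφ
  have hφm : Measurable φ := (measurable_deriv g).mul (measurable_deriv g)
  have hφd : DifferentiableOn ℂ φ {z : ℂ | 0 < z.im} :=
    (han.deriv.mul han.deriv).differentiableOn
  have hφnorm : ∀ w, ‖φ w‖ = Complex.normSq (deriv g w) := by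
    intro w
    rw [hφ]
    simp only [norm_mul]
    rw [Complex.normSq_eq_norm_sq, sq]
  have h1 := ball_mean hφm isOpenH hφd hr hsub
  have h2 : ∫⁻ w in ball z r, ENNReal.ofReal ‖φ w‖
      = ∫⁻ w in ball z r, ENNReal.ofReal (Complex.normSq (deriv g w)) := by
    apply setLIntegral_congr_fun measurableSet_ball
    intro w hw
    dsimp only
    rw [hφnorm]
  have h3 := jacobian_eq hd hi (subset_trans ball_subset_closedBall hsub)
  have h4 := volume_image_ball_le hd hi hpk hr hr2 hsub hM
  have hchain : ENNReal.ofReal (π * r ^ 2 * ‖φ z‖) ≤ ENNReal.ofReal (2 * M * r) := by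
    calc ENNReal.ofReal (π * r ^ 2 * ‖φ z‖) ≤ ∫⁻ w in ball z r, ENNReal.ofReal ‖φ w‖ := h1
      _ = volume (g '' ball z r) := by rw [h2, h3]
      _ ≤ ENNReal.ofReal (2 * M * r) := h4
  have hreal : π * r ^ 2 * ‖φ z‖ ≤ 2 * M * r :=
    (ENNReal.ofReal_le_ofReal_iff (by positivity)).1 hchain
  have hφz : ‖φ z‖ = ‖deriv g z‖ ^ 2 := by rw [hφ]; simp [norm_mul, sq]
  rw [hφz] at hreal
  nlinarith [hr, norm_nonneg (deriv g z)]

/-- universal upper bound for the derivative -/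
lemma upper_bound {g : ℂ → ℂ}
    (hd : DifferentiableOn ℂ g {z : ℂ | 0 < z.im})
    (hi : Set.InjOn g {z : ℂ | 0 < z.im})
    (hpk : ∀ k : ℤ, ∀ z : ℂ, 0 < z.im → g (z + (k:ℂ)) = g z + (k:ℂ))
    {z₀ : ℂ} (him : 2 ≤ z₀.im) : ‖deriv g z₀‖ ≤ 8 := by
  by_contra hcon
  push_neg at hcon
  set u : ℂ → ℝ := fun w => ‖deriv g w‖ with hu
  have han : AnalyticOnNhd ℂ g {z : ℂ | 0 < z.im} := hd.analyticOnNhd isOpenH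
  have hdc : ContinuousOn (deriv g) {z : ℂ | 0 < z.im} := han.deriv.continuousOn
  have hcbH : ∀ x ∈ closedBall z₀ (1/2 + 1/2), 0 < x.im := by
    intro x hx
    have : |x.im - z₀.im| ≤ 1 := by
      calc |x.im - z₀.im| = |(x - z₀).im| := by rw [Complex.sub_im]
        _ ≤ ‖x - z₀‖ := by exact Complex.abs_im_le_norm _
        _ ≤ 1 := by
            rw [← dist_eq_norm]
            have := mem_closedBall.1 hx
            linarith
    have := abs_le.1 this
    linarith [this.1]
  have hsubH : closedBall z₀ (1/2) ⊆ {w : ℂ | 0 < w.im} := fun x hx =>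
    hcbH x (closedBall_subset_closedBall (by norm_num) hx)
  have hbddK : BddAbove (u '' closedBall z₀ (1/2)) :=
    (isCompact_closedBall z₀ (1/2)).bddAbove_image ((hdc.mono hsubH).norm)
  set K := sSup (u '' closedBall z₀ (1/2)) with hK
  set sk : ℕ → ℝ := fun k => 1/2 - (1/2) * (1/2)^k with hsk
  set rk : ℕ → ℝ := fun k => (1/4) * (1/2)^k with hrk
  have hsk_nonneg : ∀ k, 0 ≤ sk k := by
    intro k
    rw [hsk]
    have : ((1:ℝ)/2)^k ≤ 1 := pow_le_one₀ (by norm_num) (by norm_num)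
    simp only
    nlinarith
  have hsk_le : ∀ k, sk k ≤ 1/2 := by
    intro k
    rw [hsk]
    have : (0:ℝ) < (1/2)^k := by positivity
    simp only
    nlinarith
  have hrk_pos : ∀ k, 0 < rk k := by intro k; rw [hrk]; positivity
  have hsum : ∀ k, sk k + rk k = sk (k+1) := by
    intro k
    rw [hsk, hrk]
    simp only
    rw [pow_succ]
    ring
  have hMfun_le : ∀ k, sSup (u '' closedBall z₀ (sk k)) ≤ K := by
    intro k
    apply csSup_le_csSup hbddK
    · exact (nonempty_closedBall.2 (hsk_nonneg k)).image u
    · exact image_mono (closedBall_subset_closedBall (hsk_le k))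
  have hMfun_nonneg : ∀ k, 0 ≤ sSup (u '' closedBall z₀ (sk k)) := by
    intro k
    have hb : BddAbove (u '' closedBall z₀ (sk k)) :=
      hbddK.mono (image_mono (closedBall_subset_closedBall (hsk_le k)))
    exact le_trans (norm_nonneg _)
      (le_csSup hb (mem_image_of_mem _ (mem_closedBall_self (hsk_nonneg k))))
  -- recurrence
  have hrec : ∀ k : ℕ, sSup (u '' closedBall z₀ (sk k)) ^ 2 * (π * rk k)
      ≤ 2 * sSup (u '' closedBall z₀ (sk (k+1))) := by
    intro k
    set M' := sSup (u '' closedBall z₀ (sk (k+1))) with hM'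
    have hM'0 : 0 ≤ M' := hMfun_nonneg (k+1)
    have hrkpos := hrk_pos k
    have hX0 : 0 ≤ 2 * M' / (π * rk k) := by positivity
    have hstep : ∀ v ∈ u '' closedBall z₀ (sk k), v ≤ Real.sqrt (2 * M' / (π * rk k)) := by
      rintro v ⟨x, hx, rfl⟩
      have hrk2 : rk k ≤ 1/2 := by
        rw [hrk]
        have : ((1:ℝ)/2)^k ≤ 1 := pow_le_one₀ (by norm_num) (by norm_num)
        nlinarith
      have hxball : closedBall x (rk k) ⊆ {w : ℂ | 0 < w.im} := by
        intro w hw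
        apply hcbH
        apply mem_closedBall.2
        calc dist w z₀ ≤ dist w x + dist x z₀ := dist_triangle _ _ _
          _ ≤ rk k + sk k := add_le_add (mem_closedBall.1 hw) (mem_closedBall.1 hx)
          _ = sk (k+1) := by rw [← hsum k]; ring
          _ ≤ 1/2 + 1/2 := by
              have h2 := hsk_le (k+1)
              linarith
      have hkey := key_ineq hd hi hpk hrkpos hrk2 hxball
      have hsubsup : sSup ((fun w => ‖deriv g w‖) '' closedBall x (rk k)) ≤ M' := by
        apply csSup_le_csSup
        · exact hbddK.mono (image_mono (closedBall_subset_closedBall (hsk_le (k+1))))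
        · exact (nonempty_closedBall.2 hrkpos.le).image _
        · apply image_mono
          apply closedBall_subset_closedBall'
          calc rk k + dist x z₀ ≤ rk k + sk k := by linarith [mem_closedBall.1 hx]
            _ = sk (k+1) := by rw [← hsum k]; ring
      have h5 : u x ^ 2 * (π * rk k) ≤ 2 * M' := le_trans hkey (by linarith)
      rw [Real.le_sqrt (norm_nonneg _) hX0]
      rw [le_div_iff₀ (by positivity)]
      exact h5
    have hsup_le : sSup (u '' closedBall z₀ (sk k)) ≤ Real.sqrt (2 * M' / (π * rk k)) :=
      csSup_le ((nonempty_closedBall.2 (hsk_nonneg k)).image u) hstep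
    have hsq : sSup (u '' closedBall z₀ (sk k)) ^ 2 ≤ 2 * M' / (π * rk k) := by
      calc sSup (u '' closedBall z₀ (sk k)) ^ 2
          ≤ Real.sqrt (2 * M' / (π * rk k)) ^ 2 :=
            pow_le_pow_left₀ (hMfun_nonneg k) hsup_le 2
        _ = 2 * M' / (π * rk k) := Real.sq_sqrt hX0
    calc sSup (u '' closedBall z₀ (sk k)) ^ 2 * (π * rk k)
        ≤ (2 * M' / (π * rk k)) * (π * rk k) := by
          apply mul_le_mul_of_nonneg_right hsq (by positivity)
      _ = 2 * M' := by field_simp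
  -- growth by induction
  have hgrow : ∀ k : ℕ, 8 * 2^k ≤ sSup (u '' closedBall z₀ (sk k)) := by
    intro k
    induction k with
    | zero =>
      have h0 : sk 0 = 0 := by rw [hsk]; norm_num
      rw [h0]
      rw [closedBall_zero, image_singleton, csSup_singleton]
      simpa using hcon.le
    | succ k ih =>
      have hr1 := hrec k
      rw [hrk] at hr1
      beta_reduce at hr1
      have hA := hMfun_nonneg k
      have hB := hMfun_nonneg (k+1)
      have h2k : (0:ℝ) < 2^k := by positivity
      have hpi : (3:ℝ) ≤ π := Real.pi_gt_three.le
      have hsq : (8 * 2^k)^2 ≤ sSup (u '' closedBall z₀ (sk k)) ^ 2 :=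
        pow_le_pow_left₀ (by positivity) ih 2
      have h5 : (2:ℝ)^k * ((1:ℝ)/2)^k = 1 := by rw [← mul_pow]; norm_num
      have e3 : ((2:ℝ)^k)^2 * ((1:ℝ)/2)^k = 2^k := by
        calc ((2:ℝ)^k)^2 * ((1:ℝ)/2)^k = (2:ℝ)^k * ((2:ℝ)^k * ((1:ℝ)/2)^k) := by ring
          _ = 2^k := by rw [h5, mul_one]
      have e1 : (8*(2:ℝ)^k)^2 * (π * (1/4*(1/2)^k))
          ≤ sSup (u '' closedBall z₀ (sk k)) ^ 2 * (π * (1/4*(1/2)^k)) :=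
        mul_le_mul_of_nonneg_right hsq (by positivity)
      have e2 : (8*(2:ℝ)^k)^2 * (π * (1/4*(1/2)^k))
          = 16 * (((2:ℝ)^k)^2*((1:ℝ)/2)^k) * π := by ring
      rw [e2, e3] at e1
      have e4 : 16*((2:ℝ)^k)*3 ≤ 16*((2:ℝ)^k)*π :=
        mul_le_mul_of_nonneg_left hpi (by positivity)
      rw [pow_succ]
      linarith [e1, e4, hr1]
  obtain ⟨k, hk⟩ := pow_unbounded_of_one_lt K (by norm_num : (1:ℝ) < 2)
  have h6 := hgrow k
  have h7 := hMfun_le k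
  have h2k : (0:ℝ) < 2^k := by positivity
  nlinarith



lemma g_int_periodic {g : ℂ → ℂ} (hp : ∀ z : ℂ, 0 < z.im → g (z + 1) = g z + 1) :
    ∀ k : ℤ, ∀ z : ℂ, 0 < z.im → g (z + (k:ℂ)) = g z + (k:ℂ) := by
  intro k
  induction k using Int.induction_on with
  | zero => simp
  | succ n ih =>
    intro z hz
    have e : z + ((((n:ℤ)+1):ℤ):ℂ) = (z + ((n:ℤ):ℂ)) + 1 := by push_cast; ring
    rw [e, hp _ (by simpa using hz), ih z hz]
    push_cast; ring
  | pred n ih =>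
    intro z hz
    have him : 0 < (z + ((-(n:ℤ)-1:ℤ):ℂ)).im := by simpa using hz
    have h2 := hp _ him
    have e : z + ((-(n:ℤ)-1:ℤ):ℂ) + 1 = z + ((-(n:ℤ):ℤ):ℂ) := by push_cast; ring
    rw [e, ih z hz] at h2
    have h3 : g (z + ((-(n:ℤ)-1:ℤ):ℂ)) = g z + ((-(n:ℤ):ℤ):ℂ) - 1 := by
      linear_combination -h2
    rw [h3]
    push_cast; ring

lemma deriv_periodic {g : ℂ → ℂ} (hp : ∀ z : ℂ, 0 < z.im → g (z + 1) = g z + 1)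
    {z : ℂ} (hz : 0 < z.im) : deriv g (z + 1) = deriv g z := by
  have h1 : deriv (fun w => g (w + 1)) z = deriv g (z + 1) := deriv_comp_add_const g 1 z
  have h2 : (fun w => g (w + 1)) =ᶠ[𝓝 z] (fun w => g w + 1) := by
    filter_upwards [isOpenH.mem_nhds hz] with w hw
    exact hp w hw
  have h3 : deriv (fun w => g (w + 1)) z = deriv (fun w => g w + 1) z := h2.deriv_eq
  rw [← h1, h3, deriv_add_const]

lemma deriv_int_periodic {g : ℂ → ℂ} (hp : ∀ z : ℂ, 0 < z.im → g (z + 1) = g z + 1) :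
    ∀ k : ℤ, ∀ z : ℂ, 0 < z.im → deriv g (z + (k:ℂ)) = deriv g z := by
  intro k
  induction k using Int.induction_on with
  | zero => simp
  | succ n ih =>
    intro z hz
    have e : z + ((((n:ℤ)+1):ℤ):ℂ) = (z + ((n:ℤ):ℂ)) + 1 := by push_cast; ring
    rw [e, deriv_periodic hp (by simpa using hz), ih z hz]
  | pred n ih =>
    intro z hz
    have him : 0 < (z + ((-(n:ℤ)-1:ℤ):ℂ)).im := by simpa using hz
    have h2 := deriv_periodic hp him
    have e : z + ((-(n:ℤ)-1:ℤ):ℂ) + 1 = z + ((-(n:ℤ):ℤ):ℂ) := by push_cast; ring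
    rw [e, ih z hz] at h2
    exact h2.symm



lemma him_div (ζ : ℂ) : (ζ / (2 * ↑π * Complex.I)).im = -ζ.re / (2*π) := by
  have hπ := Real.pi_ne_zero
  rw [Complex.div_im]
  simp [Complex.normSq_apply]
  field_simp

lemma main_est {g : ℂ → ℂ}
    (hd : DifferentiableOn ℂ g {z : ℂ | 0 < z.im})
    (hp : ∀ z : ℂ, 0 < z.im → g (z + 1) = g z + 1)
    (hupper : ∀ z₀ : ℂ, 2 ≤ z₀.im → ‖deriv g z₀‖ ≤ 8) :
    ∀ z : ℂ, 10 ≤ z.im → ‖deriv g z - 1‖ ≤ 1/2 := by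
  have hpk := deriv_int_periodic hp
  set ρ : ℝ := Real.exp (-20) with hρ
  have hρpos : 0 < ρ := Real.exp_pos _
  have hρ1 : ρ < 1 := by
    rw [hρ, show (1:ℝ) = Real.exp 0 by simp]
    exact Real.exp_lt_exp.2 (by norm_num)
  set F : ℂ → ℂ := fun w => deriv g (Complex.log w / (2 * ↑π * Complex.I)) with hF
  have him_log : ∀ w : ℂ, w ≠ 0 → ‖w‖ < ρ →
      3 ≤ (Complex.log w / (2 * ↑π * Complex.I)).im := by
    intro w hw habs
    rw [him_div, Complex.log_re]
    have h1 : Real.log ‖w‖ < -20 := by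
      have := Real.log_lt_log (norm_pos_iff.2 hw) habs
      rwa [hρ, Real.log_exp] at this
    have hπ : π < 3.15 := Real.pi_lt_d2
    have hπ0 : 0 < π := Real.pi_pos
    rw [le_div_iff₀ (by positivity)]
    nlinarith
  have hA : ∀ w : ℂ, w ∈ ball (0:ℂ) ρ \ {0} →
      3 ≤ (Complex.log w / (2 * ↑π * Complex.I)).im := by
    intro w hw
    apply him_log w hw.2
    exact mem_ball_zero_iff.1 hw.1
  have han : AnalyticOnNhd ℂ g {z : ℂ | 0 < z.im} := hd.analyticOnNhd isOpenH
  have hdga : ∀ ζ : ℂ, 0 < ζ.im → DifferentiableAt ℂ (deriv g) ζ := fun ζ hζ =>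
    (han.deriv ζ hζ).differentiableAt
  -- differentiability of F on the punctured disk
  have hFdiff : DifferentiableOn ℂ F (ball (0:ℂ) ρ \ {0}) := by
    intro w₀ hw₀
    apply DifferentiableAt.differentiableWithinAt
    have him₀ := hA w₀ hw₀
    have hw₀ne : w₀ ≠ 0 := hw₀.2
    by_cases hslit : w₀ ∈ Complex.slitPlane
    · exact DifferentiableAt.comp w₀
        (hdga (Complex.log w₀ / (2 * ↑π * Complex.I)) (by linarith))
        ((Complex.differentiableAt_log hslit).div_const _)
    · have hre : w₀.re < 0 ∧ w₀.im = 0 := by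
        rw [Complex.mem_slitPlane_iff] at hslit
        push_neg at hslit
        obtain ⟨h1, h2⟩ := hslit
        refine ⟨lt_of_le_of_ne h1 ?_, h2⟩
        intro h0
        exact hw₀ne (Complex.ext h0 h2)
      set F₂ : ℂ → ℂ := fun w => deriv g (Complex.log (-w) / (2*↑π*Complex.I) + 1/2) with hF₂
      have hnegslit : -w₀ ∈ Complex.slitPlane := by
        rw [Complex.mem_slitPlane_iff]
        left
        simpa using hre.1
      have habsneg : ‖-w₀‖ = ‖w₀‖ := by
        rw [norm_neg]
      have him₂ : 3 ≤ (Complex.log (-w₀) / (2*↑π*Complex.I)).im := by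
        apply him_log
        · exact neg_ne_zero.2 hw₀ne
        · rw [habsneg]
          exact mem_ball_zero_iff.1 hw₀.1
      have hF₂diff : DifferentiableAt ℂ F₂ w₀ := by
        have houter : DifferentiableAt ℂ (deriv g)
            (Complex.log (-w₀) / (2*↑π*Complex.I) + 1/2) := by
          apply hdga
          have h9 : (Complex.log (-w₀) / (2*↑π*Complex.I) + 1/2).im
              = (Complex.log (-w₀) / (2*↑π*Complex.I)).im := by
            rw [Complex.add_im]
            norm_num
          rw [h9]
          linarith
        have hinner : DifferentiableAt ℂ
            (fun w => Complex.log (-w) / (2*↑π*Complex.I) + 1/2) w₀ := by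
          apply DifferentiableAt.add_const
          apply DifferentiableAt.div_const
          exact (Complex.differentiableAt_log hnegslit).comp w₀
            (differentiable_neg.differentiableAt)
        exact houter.comp w₀ hinner
      have hEq : F =ᶠ[𝓝 w₀] F₂ := by
        have hopen : IsOpen {w : ℂ | w.re < 0} := isOpen_lt Complex.continuous_re continuous_const
        filter_upwards [hopen.mem_nhds hre.1, isOpen_ball.mem_nhds hw₀.1] with w hwre hwball
        have hwne : w ≠ 0 := by
          intro h
          rw [h] at hwre
          simp at hwre
        have him1 : 3 ≤ (Complex.log w / (2*↑π*Complex.I)).im := by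
          apply him_log w hwne
          exact mem_ball_zero_iff.1 hwball
        have hlogre : (Complex.log (-w)).re = (Complex.log w).re := by
          rw [Complex.log_re, Complex.log_re]
          congr 1
          rw [norm_neg]
        have hπI : (2*(π:ℂ)*Complex.I) ≠ 0 := by
          apply mul_ne_zero
          · apply mul_ne_zero two_ne_zero
            exact_mod_cast Real.pi_ne_zero
          · exact Complex.I_ne_zero
        rcases lt_trichotomy w.im 0 with hwim | hwim | hwim
        · -- im w < 0
          have harg : Complex.arg (-w) = Complex.arg w + π :=
            Complex.arg_neg_eq_arg_add_pi_of_im_neg hwim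
          have hlog : Complex.log (-w) = Complex.log w + ↑π * Complex.I := by
            apply Complex.ext
            · simpa using hlogre
            · rw [Complex.add_im, Complex.log_im, Complex.log_im, harg]
              simp
          have hz2 : Complex.log (-w) / (2*↑π*Complex.I) + 1/2
              = Complex.log w / (2*↑π*Complex.I) + 1 := by
            rw [hlog]
            field_simp
            ring
          show F w = F₂ w
          rw [hF, hF₂]
          simp only
          rw [hz2, deriv_periodic hp (by linarith : 0 < (Complex.log w / (2*↑π*Complex.I)).im)]
        · -- im w = 0
          have hargw : Complex.arg w = π := Complex.arg_eq_pi_iff.2 ⟨hwre, hwim⟩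
          have hargnw : Complex.arg (-w) = 0 := by
            apply Complex.arg_eq_zero_iff.2
            constructor
            · simp only [Complex.neg_re]; linarith
            · simp [hwim]
          have hlog : Complex.log (-w) = Complex.log w - ↑π * Complex.I := by
            apply Complex.ext
            · simpa using hlogre
            · rw [Complex.sub_im, Complex.log_im, Complex.log_im, hargnw, hargw]
              simp
          have hz2 : Complex.log (-w) / (2*↑π*Complex.I) + 1/2
              = Complex.log w / (2*↑π*Complex.I) := by
            rw [hlog]
            field_simp
            ring
          show F w = F₂ w
          rw [hF, hF₂]
          simp only
          rw [hz2]
        · -- im w > 0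
          have harg : Complex.arg (-w) = Complex.arg w - π :=
            Complex.arg_neg_eq_arg_sub_pi_of_im_pos hwim
          have hlog : Complex.log (-w) = Complex.log w - ↑π * Complex.I := by
            apply Complex.ext
            · simpa using hlogre
            · rw [Complex.sub_im, Complex.log_im, Complex.log_im, harg]
              simp
          have hz2 : Complex.log (-w) / (2*↑π*Complex.I) + 1/2
              = Complex.log w / (2*↑π*Complex.I) := by
            rw [hlog]
            field_simp
            ring
          show F w = F₂ w
          rw [hF, hF₂]
          simp only
          rw [hz2]
      exact (hEq.differentiableAt_iff).2 hF₂diff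
  -- boundedness
  have hFb : ∀ w ∈ ball (0:ℂ) ρ \ {0}, ‖F w‖ ≤ 8 := by
    intro w hw
    exact hupper _ (by linarith [hA w hw])
  set L := limUnder (𝓝[≠] (0:ℂ)) F with hL
  have hballmem : ball (0:ℂ) ρ ∈ 𝓝 (0:ℂ) := ball_mem_nhds _ hρpos
  have hbdd : BddAbove ((norm ∘ F) '' (ball (0:ℂ) ρ \ {0})) := by
    refine ⟨8, ?_⟩
    rintro y ⟨w, hw, rfl⟩
    exact hFb w hw
  have hFhat : DifferentiableOn ℂ (Function.update F 0 L) (ball (0:ℂ) ρ) :=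
    Complex.differentiableOn_update_limUnder_of_bddAbove hballmem hFdiff hbdd
  set Fh := Function.update F 0 L with hFh
  have hFh_eq : ∀ w : ℂ, w ≠ 0 → Fh w = F w := fun w hw => Function.update_of_ne hw _ _
  have hFh8 : ∀ w ∈ ball (0:ℂ) ρ, ‖Fh w‖ ≤ 8 := by
    intro w hw
    by_cases hw0 : w = 0
    · subst hw0
      have hc : ContinuousAt Fh 0 :=
        (hFhat.differentiableAt (isOpen_ball.mem_nhds (mem_ball_self hρpos))).continuousAt
      have ht : Tendsto (fun w => ‖Fh w‖) (𝓝[≠] (0:ℂ)) (𝓝 ‖Fh 0‖) :=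
        ((hc.tendsto).mono_left nhdsWithin_le_nhds).norm
      apply le_of_tendsto ht
      filter_upwards [nhdsWithin_le_nhds hballmem, self_mem_nhdsWithin] with v hv hv0
      rw [hFh_eq v hv0]
      exact hFb v ⟨hv, hv0⟩
    · rw [hFh_eq w hw0]
      exact hFb w ⟨hw, hw0⟩
  -- Schwarz lemma
  have hmaps : MapsTo Fh (ball (0:ℂ) ρ) (ball (Fh 0) 17) := by
    intro w hw
    rw [mem_ball, dist_eq_norm]
    calc ‖Fh w - Fh 0‖ ≤ ‖Fh w‖ + ‖Fh 0‖ := norm_sub_le _ _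
      _ ≤ 8 + 8 := add_le_add (hFh8 w hw) (hFh8 0 (mem_ball_self hρpos))
      _ < 17 := by norm_num
  have hschwarz : ∀ w ∈ ball (0:ℂ) ρ, ‖Fh w - Fh 0‖ ≤ 17 / ρ * ‖w‖ := by
    intro w hw
    have h10 := Complex.dist_le_div_mul_dist_of_mapsTo_ball hFhat (hmaps.mono_right ball_subset_closedBall) hw
    rw [dist_eq_norm, dist_eq_norm, sub_zero] at h10
    exact h10
  -- matching along the exponential
  have habs_exp : ∀ z : ℂ, ‖Complex.exp (2*↑π*Complex.I*z)‖
      = Real.exp (-(2*π*z.im)) := by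
    intro z
    rw [Complex.norm_exp]
    congr 1
    simp [Complex.mul_re, Complex.mul_im]
  have hsmall : ∀ z : ℂ, 4 ≤ z.im → ‖Complex.exp (2*↑π*Complex.I*z)‖ < ρ := by
    intro z hz
    rw [habs_exp, hρ]
    apply Real.exp_lt_exp.2
    have h3 := Real.pi_gt_three
    nlinarith
  have hmatch : ∀ z : ℂ, 4 ≤ z.im → Fh (Complex.exp (2*↑π*Complex.I*z)) = deriv g z := by
    intro z hz
    have hzpos : 0 < z.im := by linarith
    have hwne : Complex.exp (2*↑π*Complex.I*z) ≠ 0 := Complex.exp_ne_zero _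
    rw [hFh_eq _ hwne, hF]
    simp only
    have hexp : Complex.exp (Complex.log (Complex.exp (2*↑π*Complex.I*z)))
        = Complex.exp (2*↑π*Complex.I*z) := Complex.exp_log hwne
    obtain ⟨n, hn⟩ := Complex.exp_eq_exp_iff_exists_int.1 hexp
    have hπI : (2*(π:ℂ)*Complex.I) ≠ 0 := by
      apply mul_ne_zero
      · apply mul_ne_zero two_ne_zero
        exact_mod_cast Real.pi_ne_zero
      · exact Complex.I_ne_zero
    have hzq : Complex.log (Complex.exp (2*↑π*Complex.I*z)) / (2*↑π*Complex.I)
        = z + (n:ℂ) := by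
      rw [hn]
      field_simp
    rw [hzq]
    exact hpk n z hzpos
  -- the limit value is 1
  have hFh0 : Fh 0 = 1 := by
    have hident : ∀ y : ℝ, 4 ≤ y → ‖(1:ℂ) - Fh 0‖ ≤ 17/ρ * Real.exp (-(2*π*y)) := by
      intro y hy
      have hyim : ∀ x : ℝ, ((x:ℂ) + (y:ℂ)*Complex.I).im = y := by intro x; simp
      have hder : ∀ x ∈ Set.uIcc (0:ℝ) 1,
          HasDerivAt (fun t : ℝ => g ((t:ℂ) + (y:ℂ)*Complex.I))
          (deriv g ((x:ℂ) + (y:ℂ)*Complex.I)) x := by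
        intro x _
        have hda : DifferentiableAt ℂ g ((x:ℂ) + (y:ℂ)*Complex.I) := by
          apply hd.differentiableAt
          apply isOpenH.mem_nhds
          simp only [mem_setOf_eq, hyim]
          linarith
        have hgf := hda.hasDerivAt.hasFDerivAt.restrictScalars ℝ
        have hu : HasDerivAt (fun t : ℝ => (t:ℂ) + (y:ℂ)*Complex.I) 1 x := by
          simpa using (Complex.ofRealCLM.hasDerivAt (x := x)).add_const ((y:ℂ)*Complex.I)
        have h11 := hgf.comp_hasDerivAt x hu
        exact (HasDerivAt.comp_add_const (x:ℂ) ((y:ℂ)*Complex.I) hda.hasDerivAt).comp_ofReal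
      have hcont : Continuous (fun x : ℝ => deriv g ((x:ℂ) + (y:ℂ)*Complex.I)) := by
        apply (han.deriv.continuousOn).comp_continuous
        · fun_prop
        · intro x
          simp only [mem_setOf_eq, hyim]
          linarith
      have hint1 : IntervalIntegrable (fun x : ℝ => deriv g ((x:ℂ) + (y:ℂ)*Complex.I))
          volume 0 1 := hcont.intervalIntegrable 0 1
      have hFTC := intervalIntegral.integral_eq_sub_of_hasDerivAt hder hint1
      have hval : g (((1:ℝ):ℂ) + (y:ℂ)*Complex.I) - g (((0:ℝ):ℂ) + (y:ℂ)*Complex.I) = 1 := by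
        have h01 := hp ((y:ℂ)*Complex.I) (by simp; linarith)
        rw [show (((1:ℝ):ℂ) + (y:ℂ)*Complex.I) = (y:ℂ)*Complex.I + 1 by push_cast; ring,
          show (((0:ℝ):ℂ) + (y:ℂ)*Complex.I) = (y:ℂ)*Complex.I by push_cast; ring, h01]
        ring
      have hbound : ∀ x ∈ Set.uIoc (0:ℝ) 1,
          ‖deriv g ((x:ℂ) + (y:ℂ)*Complex.I) - Fh 0‖ ≤ 17/ρ * Real.exp (-(2*π*y)) := by
        intro x _
        have hzin : (4:ℝ) ≤ ((x:ℂ) + (y:ℂ)*Complex.I).im := by rw [hyim]; linarith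
        have hm := hmatch _ hzin
        rw [← hm]
        have hball : Complex.exp (2*↑π*Complex.I*((x:ℂ) + (y:ℂ)*Complex.I)) ∈ ball (0:ℂ) ρ := by
          rw [mem_ball_zero_iff]
          exact hsmall _ hzin
        calc ‖Fh (Complex.exp (2*↑π*Complex.I*((x:ℂ) + (y:ℂ)*Complex.I))) - Fh 0‖
            ≤ 17/ρ * ‖Complex.exp (2*↑π*Complex.I*((x:ℂ) + (y:ℂ)*Complex.I))‖ :=
              hschwarz _ hball
          _ = 17/ρ * Real.exp (-(2*π*y)) := by
              rw [habs_exp, hyim]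
      have heq2 : (1:ℂ) - Fh 0
          = ∫ x in (0:ℝ)..1, (deriv g ((x:ℂ) + (y:ℂ)*Complex.I) - Fh 0) := by
        rw [intervalIntegral.integral_sub hint1 intervalIntegrable_const, hFTC, hval,
          intervalIntegral.integral_const]
        simp
      rw [heq2]
      have h12 := intervalIntegral.norm_integral_le_of_norm_le_const hbound
      simpa using h12
    have htend : Tendsto (fun y : ℝ => 17/ρ * Real.exp (-(2*π*y))) atTop (𝓝 0) := by
      have h1 : Tendsto (fun y : ℝ => 2*π*y) atTop atTop := by
        apply Filter.Tendsto.const_mul_atTop (by positivity)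
        exact tendsto_id
      have h2 : Tendsto (fun y : ℝ => Real.exp (-(2*π*y))) atTop (𝓝 0) :=
        Real.tendsto_exp_neg_atTop_nhds_zero.comp h1
      have h3 := h2.const_mul (17/ρ)
      simpa using h3
    have hle : ‖(1:ℂ) - Fh 0‖ ≤ 0 := by
      apply ge_of_tendsto htend
      filter_upwards [eventually_ge_atTop (4:ℝ)] with y hy
      exact hident y hy
    have h13 : (1:ℂ) - Fh 0 = 0 :=
      norm_eq_zero.1 (le_antisymm hle (norm_nonneg _))
    linear_combination -h13
  -- final estimate
  intro z hz
  have hz4 : (4:ℝ) ≤ z.im := by linarith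
  have hm := hmatch z hz4
  have hball : Complex.exp (2*↑π*Complex.I*z) ∈ ball (0:ℂ) ρ := by
    rw [mem_ball_zero_iff]
    exact hsmall _ hz4
  have hs := hschwarz _ hball
  rw [hm, hFh0] at hs
  calc ‖deriv g z - 1‖ ≤ 17/ρ * ‖Complex.exp (2*↑π*Complex.I*z)‖ := hs
    _ = 17 * Real.exp (20 - 2*π*z.im) := by
        rw [habs_exp, hρ, div_eq_mul_inv, ← Real.exp_neg,
          mul_assoc, ← Real.exp_add]
        ring_nf
    _ ≤ 17 * Real.exp (-40) := by
        apply mul_le_mul_of_nonneg_left _ (by norm_num)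
        apply Real.exp_le_exp.2
        have h3 := Real.pi_gt_three
        nlinarith
    _ ≤ 1/2 := by
        have h41 : (41:ℝ) ≤ Real.exp 40 := by
          have := Real.add_one_le_exp (40:ℝ)
          linarith
        rw [Real.exp_neg, show (17:ℝ) * (Real.exp 40)⁻¹ = 17 / Real.exp 40 by ring,
          div_le_iff₀ (by positivity)]
        linarith

/-- There is a universal constant `C > 0` such that for every injective holomorphic
`g : ℍ → ℂ` with `g(z+1) = g(z)+1` and every `z` with `Im z ≥ C`,
`1/C ≤ |g'(z)| ≤ C`. -/
theorem stmt4 :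
    ∃ C : ℝ, 0 < C ∧
      ∀ g : ℂ → ℂ,
        DifferentiableOn ℂ g {z : ℂ | 0 < z.im} →
        Set.InjOn g {z : ℂ | 0 < z.im} →
        (∀ z : ℂ, 0 < z.im → g (z + 1) = g z + 1) →
        ∀ z : ℂ, 0 < z.im → C ≤ z.im →
          1 / C ≤ ‖deriv g z‖ ∧ ‖deriv g z‖ ≤ C := by
  refine ⟨10, by norm_num, ?_⟩
  intro g hd hi hp z hz0 hzC
  have hpk := g_int_periodic hp
  have hupper : ∀ z₀ : ℂ, 2 ≤ z₀.im → ‖deriv g z₀‖ ≤ 8 :=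
    fun z₀ h => upper_bound hd hi hpk h
  have hest := main_est hd hp hupper z hzC
  have habs : ‖deriv g z‖ = ‖deriv g z‖ := rfl
  have h1 : |‖deriv g z‖ - ‖(1:ℂ)‖| ≤ ‖deriv g z - 1‖ := abs_norm_sub_norm_le _ _
  rw [norm_one] at h1
  have h2 := abs_le.1 h1
  constructor
  · rw [habs]
    have := h2.1
    have h3 : (1:ℝ)/2 ≤ ‖deriv g z‖ := by linarith
    linarith
  · rw [habs]
    have := h2.2
    linarith
end
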